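/- arXiv:math/9606212 — 4 statements merged into one kernel-verified Lean document; each statement's English description precedes it below -/
import Mathlib

section
/- Let 0 → Y →^i Z →^j W → 0 be a short exact sequence of Banach spaces whose dual sequence 0 → W* →^{j*} Z* →^{i*} Y* → 0 is split (i.e., i* admits a bounded right inverse). Then for every Banach space X, the dual of the sequence 0 → X ⊗̂ Y → X ⊗̂ Z → X ⊗̂ W → 0 (with maps id_X ⊗ i, id_X ⊗ j) is also split. -/
open NormedSpace

/-- A Banach space `T` together with a bounded bilinear map `φ : X × Y → T` is *the*
projective tensor product `X ⊗̂ Y`. -/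
structure IsProjectiveTensorProduct
    (X Y T : Type*)
    [NormedAddCommGroup X] [NormedSpace ℝ X]
    [NormedAddCommGroup Y] [NormedSpace ℝ Y]
    [NormedAddCommGroup T] [NormedSpace ℝ T] [CompleteSpace T]
    (φ : X →L[ℝ] Y →L[ℝ] T) : Prop where
  dense : (Submodule.span ℝ {t : T | ∃ x y, t = φ x y}).topologicalClosure = ⊤
  lift : ∀ (W : Type) [NormedAddCommGroup W] [NormedSpace ℝ W] [CompleteSpace W]
      (b : X →L[ℝ] Y →L[ℝ] W),
      ∃ g : T →L[ℝ] W, (∀ x y, g (φ x y) = b x y) ∧ ‖g‖ = ‖b‖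

open NormedSpace ContinuousLinearMap

lemma ext_of_span_dense {T : Type*} [NormedAddCommGroup T] [NormedSpace ℝ T]
    {s : Set T} (hd : (Submodule.span ℝ s).topologicalClosure = ⊤)
    {S : Type*} [NormedAddCommGroup S] [NormedSpace ℝ S]
    {f g : T →L[ℝ] S} (h : ∀ t ∈ s, f t = g t) : f = g := by
  have hdense : Dense (Submodule.span ℝ s : Set T) :=
    Submodule.dense_iff_topologicalClosure_eq_top.mpr hd
  have heq : Set.EqOn f g (Submodule.span ℝ s : Set T) := by
    intro t ht
    exact LinearMap.eqOn_span h ht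
  ext t
  exact congrFun (Continuous.ext_on hdense f.continuous g.continuous heq) t

lemma lift_clm {X A T : Type*}
    [NormedAddCommGroup X] [NormedSpace ℝ X]
    [NormedAddCommGroup A] [NormedSpace ℝ A]
    [NormedAddCommGroup T] [NormedSpace ℝ T] [CompleteSpace T]
    (φ : X →L[ℝ] A →L[ℝ] T) (hT : IsProjectiveTensorProduct X A T φ)
    {S : Type*} [NormedAddCommGroup S] [NormedSpace ℝ S]
    (B : S →L[ℝ] (X →L[ℝ] StrongDual ℝ A)) :
    ∃ Γ : S →L[ℝ] StrongDual ℝ T, ∀ s x a, Γ s (φ x a) = B s x a := by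
  choose g hg hnorm using fun s => hT.lift ℝ (B s)
  have hadd : ∀ s s', g (s + s') = g s + g s' := by
    intro s s'
    apply ext_of_span_dense hT.dense
    rintro t ⟨x, a, rfl⟩
    simp [hg]
  have hsmul : ∀ (c : ℝ) s, g (c • s) = c • g s := by
    intro c s
    apply ext_of_span_dense hT.dense
    rintro t ⟨x, a, rfl⟩
    simp [hg]
  obtain ⟨CB, -, hCB⟩ := (ContinuousLinearMap.isBoundedLinearMap (𝕜 := ℝ) (E := S)
    (F := X →L[ℝ] StrongDual ℝ A) B).bound
  have hb : ∀ s, ‖g s‖ ≤ CB * ‖s‖ := fun s => (hnorm s).le.trans (hCB s)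
  exact ⟨LinearMap.mkContinuous
    { toFun := g, map_add' := hadd, map_smul' := hsmul } CB hb,
    fun s x a => hg s x a⟩

lemma exists_sigma {Y Z W : Type*}
    [NormedAddCommGroup Y] [NormedSpace ℝ Y] [CompleteSpace Y]
    [NormedAddCommGroup Z] [NormedSpace ℝ Z] [CompleteSpace Z]
    [NormedAddCommGroup W] [NormedSpace ℝ W] [CompleteSpace W]
    (i : Y →L[ℝ] Z) (j : Z →L[ℝ] W) (hj : Function.Surjective j)
    (hexact : LinearMap.range (i : Y →ₗ[ℝ] Z) = LinearMap.ker (j : Z →ₗ[ℝ] W))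
    (ρ : StrongDual ℝ Y →L[ℝ] StrongDual ℝ Z) (hρ : ∀ f : StrongDual ℝ Y, (ρ f).comp i = f) :
    ∃ σ : StrongDual ℝ Z →L[ℝ] StrongDual ℝ W,
      ∀ (h : StrongDual ℝ Z) (z : Z), σ h (j z) = h z - ρ (h.comp i) z := by
  obtain ⟨C, Cpos, hC⟩ := ContinuousLinearMap.exists_preimage_norm_le j hj
  choose sec hsec hsecn using hC
  set τ : StrongDual ℝ Z →L[ℝ] StrongDual ℝ Z :=
    ContinuousLinearMap.id ℝ (StrongDual ℝ Z) - ρ.comp ((compL ℝ Y Z ℝ).flip i) with hτdef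
  have hτ : ∀ (h : StrongDual ℝ Z) (z : Z), τ h z = h z - ρ (h.comp i) z := by
    intro h z; simp [hτdef]
  have hker : ∀ (h : StrongDual ℝ Z) (z : Z), j z = 0 → τ h z = 0 := by
    intro h z hz
    have hzr : z ∈ LinearMap.range (i : Y →ₗ[ℝ] Z) := by rw [hexact]; exact hz
    obtain ⟨y, rfl⟩ := hzr
    have : ρ (h.comp i) (i y) = h (i y) := by
      have := congrArg (fun f => f y) (hρ (h.comp i))
      simpa using this
    rw [hτ, ContinuousLinearMap.coe_coe, this, sub_self]
  have key : ∀ (h : StrongDual ℝ Z) (z z' : Z), j z = j z' → τ h z = τ h z' := by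
    intro h z z' hzz
    have h0 : τ h (z - z') = 0 := hker h (z - z') (by simp [hzz])
    have h1 : τ h (z - z') = τ h z - τ h z' := (τ h).map_sub z z'
    rw [h1] at h0
    linarith
  have gadd : ∀ (h : StrongDual ℝ Z) (w w' : W),
      τ h (sec (w + w')) = τ h (sec w) + τ h (sec w') := by
    intro h w w'
    have : τ h (sec (w + w')) = τ h (sec w + sec w') :=
      key h _ _ (by rw [hsec]; simp [hsec])
    rw [this, (τ h).map_add]
  have gsmul : ∀ (h : StrongDual ℝ Z) (c : ℝ) (w : W),
      τ h (sec (c • w)) = c * τ h (sec w) := by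
    intro h c w
    have : τ h (sec (c • w)) = τ h (c • sec w) :=
      key h _ _ (by rw [hsec]; simp [hsec])
    rw [this, (τ h).map_smul]; simp
  -- the lifted functional for each h
  have gbound : ∀ (h : StrongDual ℝ Z) (w : W), ‖τ h (sec w)‖ ≤ (C * ‖τ h‖) * ‖w‖ := by
    intro h w
    calc ‖τ h (sec w)‖ ≤ ‖τ h‖ * ‖sec w‖ := (τ h).le_opNorm _
    _ ≤ ‖τ h‖ * (C * ‖w‖) := mul_le_mul_of_nonneg_left (hsecn w) (norm_nonneg _)
    _ = (C * ‖τ h‖) * ‖w‖ := by ring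
  set g : StrongDual ℝ Z → StrongDual ℝ W := fun h =>
    LinearMap.mkContinuous
      { toFun := fun w => τ h (sec w)
        map_add' := gadd h
        map_smul' := gsmul h } (C * ‖τ h‖) (gbound h) with hgdef
  have hgj : ∀ (h : StrongDual ℝ Z) (z : Z), g h (j z) = τ h z := by
    intro h z
    exact key h _ _ (hsec (j z))
  have hgadd : ∀ h h', g (h + h') = g h + g h' := by
    intro h h'; ext w
    obtain ⟨z, rfl⟩ := hj w
    simp [hgj, map_add]
  have hgsmul : ∀ (c : ℝ) h, g (c • h) = c • g h := by
    intro c h; ext w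
    obtain ⟨z, rfl⟩ := hj w
    simp [hgj, map_smul]
  have hgnorm : ∀ h, ‖g h‖ ≤ (C * ‖τ‖) * ‖h‖ := by
    intro h
    have h1 : ‖g h‖ ≤ C * ‖τ h‖ :=
      LinearMap.mkContinuous_norm_le _ (by positivity) _
    calc ‖g h‖ ≤ C * ‖τ h‖ := h1
    _ ≤ C * (‖τ‖ * ‖h‖) := by gcongr; exact τ.le_opNorm h
    _ = (C * ‖τ‖) * ‖h‖ := by ring
  refine ⟨LinearMap.mkContinuous
    { toFun := g, map_add' := hgadd, map_smul' := hgsmul } (C * ‖τ‖) hgnorm,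
    fun h z => ?_⟩
  show g h (j z) = h z - ρ (h.comp i) z
  rw [hgj, hτ]

set_option maxHeartbeats 1000000 in
/-- Lemma 3.3: Let 0 → Y →^i Z →^j W → 0 be a short exact sequence of
Banach spaces whose dual sequence is split (i* admits a bounded right inverse).
Then for every Banach space X the dual of the tensored sequence
0 → X ⊗̂ Y → X ⊗̂ Z → X ⊗̂ W → 0 (maps id⊗i, id⊗j) is also split: there are bounded
operators γ : (X⊗̂Y)* → (X⊗̂Z)* and η : (X⊗̂Z)* → (X⊗̂W)* with
(id⊗i)* ∘ γ = id, η ∘ (id⊗j)* = id and γ ∘ (id⊗i)* + (id⊗j)* ∘ η = id. -/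
theorem weak_admissibility_preserved_by_projective_tensoring
    {Y Z W X : Type*}
    [NormedAddCommGroup Y] [NormedSpace ℝ Y] [CompleteSpace Y]
    [NormedAddCommGroup Z] [NormedSpace ℝ Z] [CompleteSpace Z]
    [NormedAddCommGroup W] [NormedSpace ℝ W] [CompleteSpace W]
    [NormedAddCommGroup X] [NormedSpace ℝ X] [CompleteSpace X]
    (i : Y →L[ℝ] Z) (j : Z →L[ℝ] W)
    (hi : Function.Injective i) (hj : Function.Surjective j)
    (hexact : LinearMap.range (i : Y →ₗ[ℝ] Z) = LinearMap.ker (j : Z →ₗ[ℝ] W))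
    -- weak admissibility: the dual sequence splits
    (hsplit : ∃ ρ : StrongDual ℝ Y →L[ℝ] StrongDual ℝ Z, ∀ f : StrongDual ℝ Y, (ρ f).comp i = f)
    -- the projective tensor products X ⊗̂ Y, X ⊗̂ Z, X ⊗̂ W
    {TY TZ TW : Type*}
    [NormedAddCommGroup TY] [NormedSpace ℝ TY] [CompleteSpace TY]
    [NormedAddCommGroup TZ] [NormedSpace ℝ TZ] [CompleteSpace TZ]
    [NormedAddCommGroup TW] [NormedSpace ℝ TW] [CompleteSpace TW]
    (φY : X →L[ℝ] Y →L[ℝ] TY) (hTY : IsProjectiveTensorProduct X Y TY φY)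
    (φZ : X →L[ℝ] Z →L[ℝ] TZ) (hTZ : IsProjectiveTensorProduct X Z TZ φZ)
    (φW : X →L[ℝ] W →L[ℝ] TW) (hTW : IsProjectiveTensorProduct X W TW φW)
    -- the maps id_X ⊗ i and id_X ⊗ j
    (iT : TY →L[ℝ] TZ) (hiT : ∀ x y, iT (φY x y) = φZ x (i y))
    (jT : TZ →L[ℝ] TW) (hjT : ∀ x z, jT (φZ x z) = φW x (j z)) :
    ∃ (γ : StrongDual ℝ TY →L[ℝ] StrongDual ℝ TZ) (η : StrongDual ℝ TZ →L[ℝ] StrongDual ℝ TW),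
      (∀ f : StrongDual ℝ TY, (γ f).comp iT = f) ∧
      (∀ g : StrongDual ℝ TW, η (g.comp jT) = g) ∧
      (∀ h : StrongDual ℝ TZ, γ (h.comp iT) + (η h).comp jT = h) := by
  obtain ⟨ρ, hρ⟩ := hsplit
  obtain ⟨σ, hσ⟩ := exists_sigma i j hj hexact ρ hρ
  -- the map F ↦ (x ↦ ρ (F ∘ φY x)) as a CLM
  set Bγ : StrongDual ℝ TY →L[ℝ] (X →L[ℝ] StrongDual ℝ Z) :=
    (compL ℝ X (StrongDual ℝ Y) (StrongDual ℝ Z) ρ).comp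
      (((compL ℝ X (Y →L[ℝ] TY) (StrongDual ℝ Y)).flip φY).comp (compL ℝ Y TY ℝ)) with hBγdef
  have hBγ : ∀ (F : StrongDual ℝ TY) (x : X) (z : Z), Bγ F x z = ρ (F.comp (φY x)) z := by
    intro F x z
    simp only [hBγdef, ContinuousLinearMap.coe_comp', Function.comp_apply,
      ContinuousLinearMap.flip_apply, ContinuousLinearMap.compL_apply,
      ContinuousLinearMap.comp_apply]
  set Bη : StrongDual ℝ TZ →L[ℝ] (X →L[ℝ] StrongDual ℝ W) :=
    (compL ℝ X (StrongDual ℝ Z) (StrongDual ℝ W) σ).comp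
      (((compL ℝ X (Z →L[ℝ] TZ) (StrongDual ℝ Z)).flip φZ).comp (compL ℝ Z TZ ℝ)) with hBηdef
  have hBη : ∀ (H : StrongDual ℝ TZ) (x : X) (w : W), Bη H x w = σ (H.comp (φZ x)) w := by
    intro H x w
    simp only [hBηdef, ContinuousLinearMap.coe_comp', Function.comp_apply,
      ContinuousLinearMap.flip_apply, ContinuousLinearMap.compL_apply,
      ContinuousLinearMap.comp_apply]
  obtain ⟨γ, hγ⟩ := lift_clm φZ hTZ Bγ
  obtain ⟨η, hη⟩ := lift_clm φW hTW Bη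
  have hγ' : ∀ (F : StrongDual ℝ TY) (x : X) (z : Z), γ F (φZ x z) = ρ (F.comp (φY x)) z := by
    intro F x z; rw [hγ, hBγ]
  have hη' : ∀ (H : StrongDual ℝ TZ) (x : X) (w : W), η H (φW x w) = σ (H.comp (φZ x)) w := by
    intro H x w; rw [hη, hBη]
  have hji : ∀ y : Y, j (i y) = 0 := by
    intro y
    have : i y ∈ LinearMap.ker (j : Z →ₗ[ℝ] W) := hexact ▸ LinearMap.mem_range_self i.toLinearMap y
    exact this
  refine ⟨γ, η, ?_, ?_, ?_⟩
  · intro f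
    apply ext_of_span_dense hTY.dense
    rintro t ⟨x, y, rfl⟩
    have h1 : (γ f).comp iT (φY x y) = γ f (φZ x (i y)) := by
      simp [ContinuousLinearMap.comp_apply, hiT]
    rw [h1, hγ']
    have h2 : ρ (f.comp (φY x)) (i y) = (f.comp (φY x)) y := by
      have := congrArg (fun g => g y) (hρ (f.comp (φY x)))
      simpa using this
    rw [h2]; rfl
  · intro g
    apply ext_of_span_dense hTW.dense
    rintro t ⟨x, w, rfl⟩
    rw [hη']
    obtain ⟨z, rfl⟩ := hj w
    have hcompi : ((g.comp jT).comp (φZ x)).comp i = 0 := by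
      ext y
      simp [ContinuousLinearMap.comp_apply, hjT, hji y]
    rw [hσ, hcompi]
    simp [ContinuousLinearMap.comp_apply, hjT]
  · intro h
    apply ext_of_span_dense hTZ.dense
    rintro t ⟨x, z, rfl⟩
    have hA : (h.comp iT).comp (φY x) = (h.comp (φZ x)).comp i := by
      ext y
      simp [ContinuousLinearMap.comp_apply, hiT]
    have lhs1 : γ (h.comp iT) (φZ x z) = ρ ((h.comp (φZ x)).comp i) z := by
      rw [hγ', hA]
    have lhs2 : (η h).comp jT (φZ x z) = σ (h.comp (φZ x)) (j z) := by
      simp [ContinuousLinearMap.comp_apply, hjT, hη']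
    rw [ContinuousLinearMap.add_apply, lhs1, lhs2, hσ]
    simp [ContinuousLinearMap.comp_apply]
end

section
/- Let 0 → Y →^i Z →^j W → 0 be a weakly admissible short exact sequence of Banach spaces. Then for every n ≥ 1, the kernel of j^⊗̂n : Z^⊗̂n → W^⊗̂n equals the sum of closed subspaces Z^⊗̂(n-1) ⊗̂ i(Y) + Z^⊗̂(n-2) ⊗̂ i(Y) ⊗̂ Z + ⋯ + i(Y) ⊗̂ Z^⊗̂(n-1); in particular it is the closed linear span of elementary tensors z_1 ⊗ ⋯ ⊗ z_n in which at least one z_k belongs to i(Y). -/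
open NormedSpace

/-- A Banach space `T` together with a bounded `n`-linear map `φ : Xⁿ → T` is *the*
`n`-fold projective tensor power `X^⊗̂n`. -/
structure IsProjectiveTensorPower
    (X : Type*) [NormedAddCommGroup X] [NormedSpace ℝ X]
    (n : ℕ)
    (T : Type*) [NormedAddCommGroup T] [NormedSpace ℝ T] [CompleteSpace T]
    (φ : ContinuousMultilinearMap ℝ (fun _ : Fin n => X) T) : Prop where
  dense : (Submodule.span ℝ (Set.range ⇑φ)).topologicalClosure = ⊤
  lift : ∀ (W : Type) [NormedAddCommGroup W] [NormedSpace ℝ W] [CompleteSpace W]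
      (m : ContinuousMultilinearMap ℝ (fun _ : Fin n => X) W),
      ∃ g : T →L[ℝ] W, (∀ v, g (φ v) = m v) ∧ ‖g‖ = ‖m‖

lemma aux_vanish_closure_span {X : Type*} [NormedAddCommGroup X] [NormedSpace ℝ X]
    (g : X →L[ℝ] ℝ) (s : Set X) (h : ∀ x ∈ s, g x = 0) :
    ∀ x ∈ (Submodule.span ℝ s).topologicalClosure, g x = 0 := by
  intro x hx
  have h1 : Submodule.span ℝ s ≤ LinearMap.ker (g : X →ₗ[ℝ] ℝ) := Submodule.span_le.2 fun y hy => h y hy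
  have h2 : (Submodule.span ℝ s).topologicalClosure ≤ LinearMap.ker (g : X →ₗ[ℝ] ℝ) :=
    Submodule.topologicalClosure_minimal _ h1 (ContinuousLinearMap.isClosed_ker g)
  exact h2 hx

-- approximate decomposition step
set_option maxHeartbeats 1000000 in
lemma aux_step {X : Type*} [NormedAddCommGroup X] [NormedSpace ℝ X] [CompleteSpace X]
    (M L : Submodule ℝ X)
    (C : ℝ) (hC : 0 ≤ C) (Lam : (X →L[ℝ] ℝ) → (X →L[ℝ] ℝ))
    (hL1 : ∀ G, ‖Lam G‖ ≤ C * ‖G.comp L.subtypeL‖)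
    (hL2 : ∀ G, ∀ m ∈ M, Lam G m = 0)
    (hL3 : ∀ G : X →L[ℝ] ℝ, (∀ m ∈ M, G m = 0) → ∀ l ∈ L, Lam G l = G l)
    (x : X) (hx : x ∈ closure ((M ⊔ L : Submodule ℝ X) : Set X))
    (ε : ℝ) (hε : 0 < ε) (δ : ℝ) (hδ : 0 < δ) :
    ∃ l, l ∈ L ∧ ‖l‖ ≤ C * Metric.infDist x (M : Set X) + δ ∧
      Metric.infDist (x - l) (M : Set X) ≤ ε := by
  by_contra hcon
  push_neg at hcon
  set d : ℝ := Metric.infDist x (M : Set X) with hd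
  have hd0 : 0 ≤ d := Metric.infDist_nonneg
  set r : ℝ := C * d + δ with hr
  have hrpos : 0 < r := by rw [hr]; nlinarith [mul_nonneg hC hd0]
  set V : Set X := {v | ∃ l ∈ L, ∃ m ∈ M, ‖l‖ ≤ r ∧ ‖v - l - m‖ < ε} with hV
  have hxV : x ∉ V := by
    rintro ⟨l, hl, m, hm, hlr, hvm⟩
    have h1 : Metric.infDist (x - l) (M : Set X) ≤ dist (x - l) m :=
      Metric.infDist_le_dist_of_mem hm
    have h2 : dist (x - l) m = ‖x - l - m‖ := by rw [dist_eq_norm]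
    have := hcon l hl hlr
    linarith
  have hVopen : IsOpen V := by
    rw [Metric.isOpen_iff]
    rintro v ⟨l, hl, m, hm, hlr, hvm⟩
    refine ⟨ε - ‖v - l - m‖, by linarith, fun v' hv' => ?_⟩
    refine ⟨l, hl, m, hm, hlr, ?_⟩
    have : ‖v' - l - m‖ ≤ ‖v' - v‖ + ‖v - l - m‖ := by
      have : v' - l - m = (v' - v) + (v - l - m) := by abel
      rw [this]; exact norm_add_le _ _
    have hvv : ‖v' - v‖ < ε - ‖v - l - m‖ := by
      rw [Metric.mem_ball, dist_eq_norm] at hv'; exact hv'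
    linarith
  have hVconv : Convex ℝ V := by
    rintro v₁ ⟨l₁, hl₁, m₁, hm₁, hlr₁, hvm₁⟩ v₂ ⟨l₂, hl₂, m₂, hm₂, hlr₂, hvm₂⟩ a b ha hb hab
    refine ⟨a • l₁ + b • l₂, L.add_mem (L.smul_mem _ hl₁) (L.smul_mem _ hl₂),
      a • m₁ + b • m₂, M.add_mem (M.smul_mem _ hm₁) (M.smul_mem _ hm₂), ?_, ?_⟩
    · calc ‖a • l₁ + b • l₂‖ ≤ ‖a • l₁‖ + ‖b • l₂‖ := norm_add_le _ _
        _ = a * ‖l₁‖ + b * ‖l₂‖ := by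
            rw [norm_smul, norm_smul, Real.norm_eq_abs, Real.norm_eq_abs,
              abs_of_nonneg ha, abs_of_nonneg hb]
        _ ≤ a * r + b * r := by
            gcongr
        _ = r := by rw [← add_mul, hab, one_mul]
    · have heq : a • v₁ + b • v₂ - (a • l₁ + b • l₂) - (a • m₁ + b • m₂)
          = a • (v₁ - l₁ - m₁) + b • (v₂ - l₂ - m₂) := by
        simp only [smul_sub]; abel
      rw [heq]
      calc ‖a • (v₁ - l₁ - m₁) + b • (v₂ - l₂ - m₂)‖
          ≤ a * ‖v₁ - l₁ - m₁‖ + b * ‖v₂ - l₂ - m₂‖ := by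
            refine (norm_add_le _ _).trans ?_
            rw [norm_smul, norm_smul, Real.norm_eq_abs, Real.norm_eq_abs,
              abs_of_nonneg ha, abs_of_nonneg hb]
        _ < ε := by
            rcases lt_or_ge a 0 with h | h
        -- impossible
            · linarith
            · rcases eq_or_lt_of_le ha with rfl | ha'
              · simp only [zero_mul, zero_add]
                have hb1 : b = 1 := by linarith
                rw [hb1, one_mul] at *; linarith
              · have h1 : a * ‖v₁ - l₁ - m₁‖ < a * ε := by
                  exact mul_lt_mul_of_pos_left hvm₁ ha'
                have h2 : b * ‖v₂ - l₂ - m₂‖ ≤ b * ε := by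
                  exact mul_le_mul_of_nonneg_left (le_of_lt hvm₂) hb
                nlinarith
  obtain ⟨G, hG⟩ := geometric_hahn_banach_open_point hVconv hVopen hxV
  have h0V : (0 : X) ∈ V := ⟨0, L.zero_mem, 0, M.zero_mem, by simp [le_of_lt hrpos], by simpa using hε⟩
  have hGx : 0 < G x := by have := hG 0 h0V; simpa using this
  -- G vanishes on M
  have hGM : ∀ m ∈ M, G m = 0 := by
    intro m hm
    by_contra hne
    have hmem : ∀ c : ℝ, (c • m : X) ∈ V := by
      intro c
      exact ⟨0, L.zero_mem, c • m, M.smul_mem _ hm, by simp [le_of_lt hrpos], by simpa using hε⟩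
    have hlt : ∀ c : ℝ, c * G m < G x := by
      intro c; have := hG _ (hmem c); simpa using this
    rcases lt_or_gt_of_ne hne with h | h
    · have := hlt ((G x + 1) / G m)
      rw [div_mul_cancel₀] at this
      · linarith
      · exact ne_of_lt h
    · have := hlt ((G x + 1) / G m)
      rw [div_mul_cancel₀] at this
      · linarith
      · exact ne_of_gt h
  -- bound for G on L
  have hGL : ∀ u, u ∈ L → |G u| ≤ (G x / r) * ‖u‖ := by
    intro u hu
    have key : ∀ w, w ∈ L → ‖w‖ ≤ r → |G w| ≤ G x := by
      intro w hw hwr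
      have h1 : G w < G x := hG w ⟨w, hw, 0, M.zero_mem, by simpa using hwr, by simpa using hε⟩
      have h2 : G (-w) < G x := hG (-w) ⟨-w, L.neg_mem hw, 0, M.zero_mem, by simpa using hwr,
        by simpa using hε⟩
      rw [map_neg] at h2
      rw [abs_le]; constructor <;> linarith
    rcases eq_or_ne u 0 with rfl | hu0
    · simp
    · have hnu : 0 < ‖u‖ := norm_pos_iff.2 hu0
      have := key ((r / ‖u‖) • u) (L.smul_mem _ hu) (by
        rw [norm_smul, Real.norm_eq_abs, abs_of_nonneg (le_of_lt (div_pos hrpos hnu))]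
        rw [div_mul_cancel₀]
        exact ne_of_gt hnu)
      rw [map_smul] at this
      have h3 : |(r / ‖u‖) * G u| = (r / ‖u‖) * |G u| := by
        rw [abs_mul, abs_of_nonneg (by positivity)]
      rw [smul_eq_mul] at this
      rw [h3] at this
      have h4 : r * |G u| ≤ G x * ‖u‖ := by
        have h5 := mul_le_mul_of_nonneg_right this (le_of_lt hnu)
        calc r * |G u| = r / ‖u‖ * |G u| * ‖u‖ := by field_simp
          _ ≤ G x * ‖u‖ := h5
      rw [div_mul_eq_mul_div, le_div_iff₀ hrpos]
      nlinarith
  have hres : ‖G.comp L.subtypeL‖ ≤ G x / r := by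
    refine ContinuousLinearMap.opNorm_le_bound _ (le_of_lt (div_pos hGx hrpos)) ?_
    rintro ⟨u, hu⟩
    simpa [Real.norm_eq_abs] using hGL u hu
  set G' := Lam G with hG'def
  have hG'M : ∀ m ∈ M, G' m = 0 := hL2 G
  have hG'L : ∀ l ∈ L, G' l = G l := hL3 G hGM
  have hG'n : ‖G'‖ ≤ C * (G x / r) :=
    le_trans (hL1 G) (mul_le_mul_of_nonneg_left hres hC)
  have hagree : G x = G' x := by
    have hsub : ((M ⊔ L : Submodule ℝ X) : Set X) ⊆ {y | G y = G' y} := by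
      rintro y hy
      obtain ⟨m, hm, l, hl, rfl⟩ := Submodule.mem_sup.1 hy
      simp only [Set.mem_setOf_eq, map_add, hGM m hm, hG'M m hm, hG'L l hl, zero_add]
    have hclosed : IsClosed {y : X | G y = G' y} :=
      isClosed_eq G.continuous (Lam G).continuous
    exact closure_minimal hsub hclosed hx
  have hG'x : |G' x| ≤ ‖G'‖ * d := by
    by_contra hcc
    push_neg at hcc
    have hMne : (M : Set X).Nonempty := ⟨0, M.zero_mem⟩
    have hB : (0:ℝ) ≤ ‖G'‖ := norm_nonneg _
    have ht : 0 < |G' x| - ‖G'‖ * d := by linarith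
    set c := d + (|G' x| - ‖G'‖ * d) / (‖G'‖ + 1) with hc
    have hcd : d < c := by
      have h7 : 0 < (|G' x| - ‖G'‖ * d) / (‖G'‖ + 1) := div_pos ht (by positivity)
      rw [hc]; linarith
    obtain ⟨m, hm, hdist⟩ := (Metric.infDist_lt_iff hMne).1 hcd
    have hfin : |G' x| ≤ ‖G'‖ * d + ‖G'‖ * ((|G' x| - ‖G'‖ * d) / (‖G'‖ + 1)) := by
      have e1 : |G' x| = |G' (x - m)| := by rw [map_sub, hG'M m hm, sub_zero]
      have e2 : |G' (x - m)| ≤ ‖G'‖ * ‖x - m‖ := by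
        have := G'.le_opNorm (x - m)
        simpa [Real.norm_eq_abs] using this
      have e3 : ‖x - m‖ ≤ c := by rw [← dist_eq_norm]; exact le_of_lt hdist
      calc |G' x| = |G' (x - m)| := e1
        _ ≤ ‖G'‖ * ‖x - m‖ := e2
        _ ≤ ‖G'‖ * c := by gcongr
        _ = ‖G'‖ * d + ‖G'‖ * ((|G' x| - ‖G'‖ * d) / (‖G'‖ + 1)) := by rw [hc]; ring
    have hkey : ‖G'‖ * ((|G' x| - ‖G'‖ * d) / (‖G'‖ + 1)) < |G' x| - ‖G'‖ * d := by
      rw [mul_div_assoc', div_lt_iff₀ (by positivity)]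
      nlinarith
    linarith
  have hstep : G x ≤ C * (G x / r) * d := by
    calc G x = G' x := hagree
      _ ≤ |G' x| := le_abs_self _
      _ ≤ ‖G'‖ * d := hG'x
      _ ≤ C * (G x / r) * d := by gcongr
  have hlt : C * d < r := by rw [hr]; linarith
  have hfin2 : G x * r ≤ G x * (C * d) := by
    have h6 : G x ≤ G x * (C * d) / r := by
      calc G x ≤ C * (G x / r) * d := hstep
        _ = G x * (C * d) / r := by ring
    rw [le_div_iff₀ hrpos] at h6; linarith
  nlinarith [mul_lt_mul_of_pos_left hlt hGx]

set_option maxHeartbeats 1000000 in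
lemma aux_isClosed_sup {X : Type*} [NormedAddCommGroup X] [NormedSpace ℝ X] [CompleteSpace X]
    (M L : Submodule ℝ X) (hM : IsClosed (M : Set X)) (hL : IsClosed (L : Set X))
    (C : ℝ) (hC : 0 ≤ C) (Lam : (X →L[ℝ] ℝ) → (X →L[ℝ] ℝ))
    (hL1 : ∀ G, ‖Lam G‖ ≤ C * ‖G.comp L.subtypeL‖)
    (hL2 : ∀ G, ∀ m ∈ M, Lam G m = 0)
    (hL3 : ∀ G : X →L[ℝ] ℝ, (∀ m ∈ M, G m = 0) → ∀ l ∈ L, Lam G l = G l) :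
    IsClosed ((M ⊔ L : Submodule ℝ X) : Set X) := by
  apply isClosed_of_closure_subset
  intro t ht
  have key : ∀ p : {p : X // p ∈ closure ((M ⊔ L : Submodule ℝ X) : Set X)}, ∀ k : ℕ,
      ∃ l, l ∈ L ∧ ‖l‖ ≤ C * Metric.infDist p.1 (M : Set X) + (1/2)^k ∧
        Metric.infDist (p.1 - l) (M : Set X) ≤ (1/2)^(k+1) :=
    fun p k => aux_step M L C hC Lam hL1 hL2 hL3 p.1 p.2 _ (by positivity) _ (by positivity)
  choose lf hlf1 hlf2 hlf3 using key
  have hsubmem : ∀ p : {p : X // p ∈ closure (((M ⊔ L : Submodule ℝ X)) : Set X)}, ∀ k,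
      p.1 - lf p k ∈ closure ((M ⊔ L : Submodule ℝ X) : Set X) := by
    intro p k
    have h1 : p.1 ∈ (M ⊔ L : Submodule ℝ X).topologicalClosure := by
      rw [← SetLike.mem_coe, Submodule.topologicalClosure_coe]; exact p.2
    have h2 : lf p k ∈ (M ⊔ L : Submodule ℝ X).topologicalClosure :=
      (M ⊔ L : Submodule ℝ X).le_topologicalClosure (Submodule.mem_sup_right (hlf1 p k))
    have h3 := Submodule.sub_mem _ h1 h2
    rw [← SetLike.mem_coe, Submodule.topologicalClosure_coe] at h3; exact h3
  let seq : ℕ → {p : X // p ∈ closure ((M ⊔ L : Submodule ℝ X) : Set X)} :=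
    fun k => Nat.rec ⟨t, ht⟩ (fun k p => ⟨p.1 - lf p k, hsubmem p k⟩) k
  have hseq : ∀ k, (seq (k+1)).1 = (seq k).1 - lf (seq k) k := fun k => rfl
  have hseq0 : (seq 0).1 = t := rfl
  have hDk : ∀ k, Metric.infDist (seq (k+1)).1 (M : Set X) ≤ (1/2)^(k+1) := by
    intro k; rw [hseq]; exact hlf3 (seq k) k
  set l : ℕ → X := fun k => lf (seq k) k with hldef
  have hlL : ∀ k, l k ∈ L := fun k => hlf1 _ _
  set A : ℝ := C * Metric.infDist t (M : Set X) + C + 1 with hA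
  have hd0 : 0 ≤ Metric.infDist t (M : Set X) := Metric.infDist_nonneg
  have hlnorm : ∀ k, ‖l k‖ ≤ A * (1/2)^k := by
    intro k
    cases k with
    | zero =>
      have h1 := hlf2 ⟨t, ht⟩ 0
      have h2 : (seq 0) = ⟨t, ht⟩ := rfl
      rw [hldef]
      simp only [h2, pow_zero, mul_one] at h1 ⊢
      rw [hA]; linarith
    | succ k =>
      have h1 := hlf2 (seq (k+1)) (k+1)
      have h2 := hDk k
      have h3 : (0:ℝ) < (1/2)^(k+1) := by positivity
      have h4 : C * Metric.infDist (seq (k+1)).1 (M : Set X) ≤ C * (1/2)^(k+1) :=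
        mul_le_mul_of_nonneg_left h2 hC
      rw [hldef]
      simp only []
      rw [hA]
      nlinarith [mul_nonneg hC hd0, mul_nonneg hC (le_of_lt h3)]
  have hsum : Summable l := by
    apply Summable.of_norm
    apply Summable.of_nonneg_of_le (fun k => norm_nonneg _) hlnorm
    exact (summable_geometric_of_lt_one (by norm_num) (by norm_num)).mul_left _
  obtain ⟨s, hs⟩ := hsum
  have hsL : s ∈ L := by
    refine hL.mem_of_tendsto hs (Filter.Eventually.of_forall fun fs => ?_)
    exact Submodule.sum_mem L fun k _ => hlL k
  have hpart : ∀ k, (seq k).1 = t - ∑ m ∈ Finset.range k, l m := by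
    intro k; induction k with
    | zero => simp [hseq0]
    | succ k ih => rw [hseq, ih, Finset.sum_range_succ]; abel
  have htend : Filter.Tendsto (fun k => (seq k).1) Filter.atTop (nhds (t - s)) := by
    have h1 := hs.tendsto_sum_nat
    exact (tendsto_const_nhds.sub h1).congr (fun k => (hpart k).symm)
  have hDlim : Filter.Tendsto (fun k => Metric.infDist (seq k).1 (M : Set X)) Filter.atTop
      (nhds (Metric.infDist (t - s) (M : Set X))) := by
    have h := (Metric.continuous_infDist_pt (M : Set X)).tendsto (t - s)
    exact h.comp htend
  have hD0 : Metric.infDist (t - s) (M : Set X) = 0 := by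
    have h2 : Filter.Tendsto (fun k : ℕ => ((1:ℝ)/2)^k) Filter.atTop (nhds 0) :=
      tendsto_pow_atTop_nhds_zero_of_lt_one (by norm_num) (by norm_num)
    apply le_antisymm _ Metric.infDist_nonneg
    have hb : ∀ᶠ k in Filter.atTop, Metric.infDist (seq k).1 (M : Set X) ≤ ((1:ℝ)/2)^k := by
      rw [Filter.eventually_atTop]
      refine ⟨1, fun k hk => ?_⟩
      obtain ⟨m, rfl⟩ := Nat.exists_eq_add_of_le hk
      have := hDk m
      simpa [Nat.add_comm] using this
    have := le_of_tendsto_of_tendsto hDlim h2 hb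
    simpa using this
  have htsM : t - s ∈ M := by
    have h1 : t - s ∈ closure (M : Set X) :=
      (Metric.mem_closure_iff_infDist_zero ⟨0, M.zero_mem⟩).2 hD0
    rwa [hM.closure_eq] at h1
  have : t - s + s ∈ (M ⊔ L : Submodule ℝ X) :=
    Submodule.add_mem _ (Submodule.mem_sup_left htsM) (Submodule.mem_sup_right hsL)
  rw [sub_add_cancel] at this
  exact SetLike.mem_coe.mpr this



section TensorAux

variable {Y Z : Type*} [NormedAddCommGroup Y] [NormedSpace ℝ Y]
  [NormedAddCommGroup Z] [NormedSpace ℝ Z]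
  {n : ℕ} {TZ : Type*} [NormedAddCommGroup TZ] [NormedSpace ℝ TZ] [CompleteSpace TZ]

/-- The closed subspace of `TZ` spanned by elementary tensors whose `k`-th slot is in range `i`. -/
def auxMk (i : Y →L[ℝ] Z) (φZ : ContinuousMultilinearMap ℝ (fun _ : Fin n => Z) TZ)
    (k : Fin n) : Submodule ℝ TZ :=
  (Submodule.span ℝ {t : TZ | ∃ v : Fin n → Z, v k ∈ Set.range i ∧ t = φZ v}).topologicalClosure

lemma aux_vanish_closure_span' {X : Type*} [NormedAddCommGroup X] [NormedSpace ℝ X]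
    (g : X →L[ℝ] ℝ) (s : Set X) (h : ∀ x ∈ s, g x = 0) :
    ∀ x ∈ (Submodule.span ℝ s).topologicalClosure, g x = 0 := by
  intro x hx
  have h1 : Submodule.span ℝ s ≤ LinearMap.ker (g : X →ₗ[ℝ] ℝ) := Submodule.span_le.2 fun y hy => h y hy
  have h2 : (Submodule.span ℝ s).topologicalClosure ≤ LinearMap.ker (g : X →ₗ[ℝ] ℝ) :=
    Submodule.topologicalClosure_minimal _ h1 (ContinuousLinearMap.isClosed_ker g)
  exact h2 hx

lemma aux_ext (φZ : ContinuousMultilinearMap ℝ (fun _ : Fin n => Z) TZ)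
    (hd : (Submodule.span ℝ (Set.range ⇑φZ)).topologicalClosure = ⊤)
    (g₁ g₂ : TZ →L[ℝ] ℝ) (h : ∀ v, g₁ (φZ v) = g₂ (φZ v)) : g₁ = g₂ := by
  ext x
  have h1 : ∀ t ∈ Set.range ⇑φZ, (g₁ - g₂) t = 0 := by
    rintro _ ⟨v, rfl⟩
    simp [h v]
  have h2 := aux_vanish_closure_span' (g₁ - g₂) (Set.range ⇑φZ) h1 x
    (by rw [hd]; exact Submodule.mem_top)
  simpa [sub_eq_zero] using h2

set_option maxHeartbeats 1000000 in
set_option synthInstance.maxHeartbeats 1000000 in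
lemma aux_exists_Xk
    (i : Y →L[ℝ] Z) (ρ : StrongDual ℝ Y →L[ℝ] StrongDual ℝ Z) (hρ : ∀ f : StrongDual ℝ Y, (ρ f).comp i = f)
    (φZ : ContinuousMultilinearMap ℝ (fun _ : Fin n => Z) TZ)
    (hd : (Submodule.span ℝ (Set.range ⇑φZ)).topologicalClosure = ⊤)
    (hlift : ∀ (m : ContinuousMultilinearMap ℝ (fun _ : Fin n => Z) ℝ),
      ∃ g : TZ →L[ℝ] ℝ, (∀ v, g (φZ v) = m v) ∧ ‖g‖ = ‖m‖)
    (k : Fin n) :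
    ∃ Xk : (TZ →L[ℝ] ℝ) → (TZ →L[ℝ] ℝ),
      (∀ H, ‖Xk H‖ ≤ ‖ρ‖ * ‖i‖ * ‖φZ‖ * ‖H.comp (auxMk i φZ k).subtypeL‖) ∧
      (∀ H, ∀ x ∈ auxMk i φZ k, Xk H x = H x) ∧
      (∀ (m : Fin n), m ≠ k → ∀ H : TZ →L[ℝ] ℝ, (∀ x ∈ auxMk i φZ m, H x = 0) →
        ∀ x ∈ auxMk i φZ m, Xk H x = 0) ∧
      (∀ H : TZ →L[ℝ] ℝ, (∀ x ∈ auxMk i φZ k, H x = 0) → Xk H = 0) := by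
  classical
  -- the `Y`-functional obtained by fixing all slots of `v` except slot `k`
  have hmem : ∀ (v : Fin n → Z) (y : Y), φZ (Function.update v k (i y)) ∈ auxMk i φZ k := by
    intro v y
    apply Submodule.le_topologicalClosure
    apply Submodule.subset_span
    exact ⟨Function.update v k (i y), ⟨y, (Function.update_self k (i y) v).symm⟩, rfl⟩
  set fv : (TZ →L[ℝ] ℝ) → (Fin n → Z) → StrongDual ℝ Y :=
    fun H v => H.comp ((φZ.toContinuousLinearMap v k).comp i) with hfvdef
  have hfv : ∀ H v y, fv H v y = H (φZ (Function.update v k (i y))) := by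
    intro H v y
    simp [hfvdef]
  have hprod : ∀ (v : Fin n → Z) (z : Z), (∏ m, ‖Function.update v k z m‖)
      = ‖z‖ * ∏ m ∈ Finset.univ.erase k, ‖v m‖ := by
    intro v z
    have e : (fun m => ‖Function.update v k z m‖) = Function.update (fun m => ‖v m‖) k ‖z‖ := by
      funext m
      exact Function.apply_update (fun _ s => ‖s‖) v k z m
    rw [show (∏ m, ‖Function.update v k z m‖) = ∏ m, (fun m => ‖Function.update v k z m‖) m from rfl]
    rw [e, Finset.erase_eq, Finset.prod_update_of_mem (Finset.mem_univ k)]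
  have hfvnorm : ∀ H v, ‖fv H v‖ ≤ ‖H.comp (auxMk i φZ k).subtypeL‖ * ‖i‖ * ‖φZ‖ *
      ∏ m ∈ Finset.univ.erase k, ‖v m‖ := by
    intro H v
    have hpn : (0:ℝ) ≤ ∏ m ∈ Finset.univ.erase k, ‖v m‖ :=
      Finset.prod_nonneg fun m _ => norm_nonneg _
    apply ContinuousLinearMap.opNorm_le_bound _ (by positivity)
    intro y
    have e1 : fv H v y = (H.comp (auxMk i φZ k).subtypeL) ⟨_, hmem v y⟩ := by
      rw [hfv]; rfl
    rw [Real.norm_eq_abs, e1]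
    have e2 := (H.comp (auxMk i φZ k).subtypeL).le_opNorm
      (⟨_, hmem v y⟩ : auxMk i φZ k)
    have e3 : ‖(⟨_, hmem v y⟩ : auxMk i φZ k)‖ = ‖φZ (Function.update v k (i y))‖ := rfl
    rw [e3] at e2
    have e4 : ‖φZ (Function.update v k (i y))‖ ≤ ‖φZ‖ * ∏ m, ‖Function.update v k (i y) m‖ :=
      φZ.le_opNorm _
    rw [hprod v (i y)] at e4
    have e5 : ‖i y‖ ≤ ‖i‖ * ‖y‖ := i.le_opNorm y
    have hres : (0:ℝ) ≤ ‖H.comp (auxMk i φZ k).subtypeL‖ := ContinuousLinearMap.opNorm_nonneg _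
    have e6 : ‖φZ (Function.update v k (i y))‖ ≤
        ‖φZ‖ * ((‖i‖ * ‖y‖) * ∏ m ∈ Finset.univ.erase k, ‖v m‖) := by
      refine e4.trans ?_
      exact mul_le_mul_of_nonneg_left (mul_le_mul_of_nonneg_right e5 hpn) (norm_nonneg _)
    calc |(H.comp (auxMk i φZ k).subtypeL) ⟨_, hmem v y⟩|
        ≤ ‖H.comp (auxMk i φZ k).subtypeL‖ * ‖φZ (Function.update v k (i y))‖ := by
          simpa [Real.norm_eq_abs] using e2
      _ ≤ ‖H.comp (auxMk i φZ k).subtypeL‖ *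
            (‖φZ‖ * ((‖i‖ * ‖y‖) * ∏ m ∈ Finset.univ.erase k, ‖v m‖)) :=
          mul_le_mul_of_nonneg_left e6 hres
      _ = ‖H.comp (auxMk i φZ k).subtypeL‖ * ‖i‖ * ‖φZ‖ *
            (∏ m ∈ Finset.univ.erase k, ‖v m‖) * ‖y‖ := by ring
  -- main existence of the lifted functional for each `H`
  have hB : ∀ H : TZ →L[ℝ] ℝ, ∃ XH : TZ →L[ℝ] ℝ,
      (∀ v, XH (φZ v) = ρ (fv H v) (v k)) ∧
      ‖XH‖ ≤ ‖ρ‖ * ‖i‖ * ‖φZ‖ * ‖H.comp (auxMk i φZ k).subtypeL‖ := by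
    intro H
    have hCLM : ∀ (v : Fin n → Z) (a : Z),
        φZ.toContinuousLinearMap (Function.update v k a) k = φZ.toContinuousLinearMap v k := by
      intro v a
      ext z
      simp [Function.update_idem]
    have hfvk : ∀ (v : Fin n → Z) (a : Z), fv H (Function.update v k a) = fv H v := by
      intro v a
      rw [hfvdef]
      simp only []
      rw [hCLM v a]
    have hfv_add : ∀ (v : Fin n → Z) (m : Fin n), m ≠ k → ∀ (x y : Z),
        fv H (Function.update v m (x + y)) =
          fv H (Function.update v m x) + fv H (Function.update v m y) := by
      intro v m hmk x y
      ext y'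
      rw [ContinuousLinearMap.add_apply, hfv, hfv, hfv]
      rw [Function.update_comm hmk, Function.update_comm hmk, Function.update_comm hmk]
      rw [φZ.map_update_add _ m x y]
      rw [map_add]
    have hfv_smul : ∀ (v : Fin n → Z) (m : Fin n), m ≠ k → ∀ (c : ℝ) (x : Z),
        fv H (Function.update v m (c • x)) = c • fv H (Function.update v m x) := by
      intro v m hmk c x
      ext y'
      rw [ContinuousLinearMap.smul_apply, hfv, hfv]
      rw [Function.update_comm hmk, Function.update_comm hmk]
      rw [φZ.map_update_smul _ m c x]
      rw [map_smul]
    set B : MultilinearMap ℝ (fun _ : Fin n => Z) ℝ :=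
      { toFun := fun v => ρ (fv H v) (v k)
        map_update_add' := by
          intro dec v m x y
          have hdec : dec = instDecidableEqFin n := Subsingleton.elim _ _
          subst hdec
          by_cases hmk : m = k
          · subst hmk
            rw [hfvk v (x + y), hfvk v x, hfvk v y]
            simp [Function.update_self]
          · rw [hfv_add v m hmk x y]
            have e1 : Function.update v m (x + y) k = v k := Function.update_of_ne (Ne.symm hmk) _ _
            have e2 : Function.update v m x k = v k := Function.update_of_ne (Ne.symm hmk) _ _
            have e3 : Function.update v m y k = v k := Function.update_of_ne (Ne.symm hmk) _ _
            rw [e1, e2, e3, map_add, ContinuousLinearMap.add_apply]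
        map_update_smul' := by
          intro dec v m c x
          have hdec : dec = instDecidableEqFin n := Subsingleton.elim _ _
          subst hdec
          by_cases hmk : m = k
          · subst hmk
            rw [hfvk v (c • x), hfvk v x]
            simp [Function.update_self]
          · rw [hfv_smul v m hmk c x]
            have e1 : Function.update v m (c • x) k = v k := Function.update_of_ne (Ne.symm hmk) _ _
            have e2 : Function.update v m x k = v k := Function.update_of_ne (Ne.symm hmk) _ _
            rw [e1, e2, map_smul, ContinuousLinearMap.smul_apply] } with hBdef
    have hBbound : ∀ v, ‖B v‖ ≤
        (‖ρ‖ * ‖i‖ * ‖φZ‖ * ‖H.comp (auxMk i φZ k).subtypeL‖) * ∏ m, ‖v m‖ := by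
      intro v
      have e1 : B v = ρ (fv H v) (v k) := rfl
      rw [e1]
      have e2 : ‖ρ (fv H v) (v k)‖ ≤ ‖ρ (fv H v)‖ * ‖v k‖ := (ρ (fv H v)).le_opNorm _
      have e3 : ‖ρ (fv H v)‖ ≤ ‖ρ‖ * ‖fv H v‖ := ρ.le_opNorm _
      have e4 := hfvnorm H v
      have e5 : (∏ m, ‖v m‖) = ‖v k‖ * ∏ m ∈ Finset.univ.erase k, ‖v m‖ :=
        (Finset.mul_prod_erase Finset.univ (fun m => ‖v m‖) (Finset.mem_univ k)).symm
      rw [e5]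
      have hvk : (0:ℝ) ≤ ‖v k‖ := norm_nonneg _
      have hpn : (0:ℝ) ≤ ∏ m ∈ Finset.univ.erase k, ‖v m‖ :=
        Finset.prod_nonneg fun m _ => norm_nonneg _
      calc ‖ρ (fv H v) (v k)‖ ≤ ‖ρ (fv H v)‖ * ‖v k‖ := e2
        _ ≤ (‖ρ‖ * ‖fv H v‖) * ‖v k‖ := by gcongr
        _ ≤ (‖ρ‖ * (‖H.comp (auxMk i φZ k).subtypeL‖ * ‖i‖ * ‖φZ‖ *
              ∏ m ∈ Finset.univ.erase k, ‖v m‖)) * ‖v k‖ := by gcongr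
        _ = (‖ρ‖ * ‖i‖ * ‖φZ‖ * ‖H.comp (auxMk i φZ k).subtypeL‖) *
              (‖v k‖ * ∏ m ∈ Finset.univ.erase k, ‖v m‖) := by ring
    set Bc : ContinuousMultilinearMap ℝ (fun _ : Fin n => Z) ℝ :=
      B.mkContinuous _ hBbound with hBc
    obtain ⟨XH, hXH1, hXH2⟩ := hlift Bc
    refine ⟨XH, fun v => ?_, ?_⟩
    · rw [hXH1 v]; rfl
    · rw [hXH2]
      exact B.mkContinuous_norm_le (by positivity) _
  choose Xk hXk1 hXk2 using hB
  refine ⟨Xk, fun H => (hXk2 H), ?_, ?_, ?_⟩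
  · -- agreement on auxMk k
    intro H x hx
    have hvan : ∀ t ∈ {t : TZ | ∃ v : Fin n → Z, v k ∈ Set.range i ∧ t = φZ v},
        (Xk H - H) t = 0 := by
      rintro t ⟨v, ⟨y₀, hy₀⟩, rfl⟩
      have e1 : Xk H (φZ v) = ρ (fv H v) (v k) := hXk1 H v
      rw [ContinuousLinearMap.sub_apply, e1, ← hy₀]
      have e2 : ρ (fv H v) (i y₀) = fv H v y₀ := by
        have := hρ (fv H v)
        calc ρ (fv H v) (i y₀) = ((ρ (fv H v)).comp i) y₀ := rfl
          _ = fv H v y₀ := by rw [this]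
      rw [e2, hfv]
      have e3 : Function.update v k (i y₀) = v := by
        rw [hy₀]; exact Function.update_eq_self k v
      rw [e3, sub_self]
    have := aux_vanish_closure_span' (Xk H - H) _ hvan x hx
    have e4 : Xk H x - H x = 0 := by simpa using this
    linarith [e4]
  · -- killing other slots
    intro m hmk H hH x hx
    have hvan : ∀ t ∈ {t : TZ | ∃ v : Fin n → Z, v m ∈ Set.range i ∧ t = φZ v},
        (Xk H) t = 0 := by
      rintro t ⟨v, hvm, rfl⟩
      rw [hXk1 H v]
      have e1 : fv H v = 0 := by
        ext y
        rw [hfv]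
        apply hH
        apply Submodule.le_topologicalClosure
        apply Submodule.subset_span
        refine ⟨Function.update v k (i y), ?_, rfl⟩
        rw [Function.update_of_ne hmk]
        exact hvm
      rw [e1]
      simp
    exact aux_vanish_closure_span' (Xk H) _ hvan x hx
  · -- Xk H = 0 if H vanishes on auxMk k
    intro H hH
    apply aux_ext φZ hd
    intro v
    rw [hXk1 H v]
    have e1 : fv H v = 0 := by
      ext y
      rw [hfv]
      exact hH _ (hmem v y)
    rw [e1]
    simp

end TensorAux


set_option maxHeartbeats 4000000 in
set_option synthInstance.maxHeartbeats 1000000 in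
/-- Lemma 3.4(ii): For a weakly admissible short exact sequence
0 → Y →^i Z →^j W → 0 of Banach spaces and every n ≥ 1, the kernel of
j^⊗̂n : Z^⊗̂n → W^⊗̂n equals the sum over k of the closed subspaces
Z^⊗̂(k) ⊗̂ i(Y) ⊗̂ Z^⊗̂(n-1-k) (closed span of elementary tensors whose k-th factor
lies in i(Y)); in particular it is the closed linear span of the elementary tensors
z₁ ⊗ ⋯ ⊗ z_n in which at least one factor belongs to i(Y). -/
theorem kernel_of_tensor_power_of_quotient_map
    {Y Z W : Type*}
    [NormedAddCommGroup Y] [NormedSpace ℝ Y] [CompleteSpace Y]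
    [NormedAddCommGroup Z] [NormedSpace ℝ Z] [CompleteSpace Z]
    [NormedAddCommGroup W] [NormedSpace ℝ W] [CompleteSpace W]
    (i : Y →L[ℝ] Z) (j : Z →L[ℝ] W)
    (hi : Function.Injective i) (hj : Function.Surjective j)
    (hexact : LinearMap.range (i : Y →ₗ[ℝ] Z) = LinearMap.ker (j : Z →ₗ[ℝ] W))
    -- weak admissibility: the dual sequence splits
    (hsplit : ∃ ρ : StrongDual ℝ Y →L[ℝ] StrongDual ℝ Z, ∀ f : StrongDual ℝ Y, (ρ f).comp i = f)
    (n : ℕ) (hn : 1 ≤ n)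
    {TZ TW : Type*}
    [NormedAddCommGroup TZ] [NormedSpace ℝ TZ] [CompleteSpace TZ]
    [NormedAddCommGroup TW] [NormedSpace ℝ TW] [CompleteSpace TW]
    (φZ : ContinuousMultilinearMap ℝ (fun _ : Fin n => Z) TZ)
    (hTZ : IsProjectiveTensorPower Z n TZ φZ)
    (φW : ContinuousMultilinearMap ℝ (fun _ : Fin n => W) TW)
    (hTW : IsProjectiveTensorPower W n TW φW)
    (F : TZ →L[ℝ] TW) (hF : ∀ v : Fin n → Z, F (φZ v) = φW fun k => j (v k)) :
    LinearMap.ker (F : TZ →ₗ[ℝ] TW) =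
      (⨆ k : Fin n,
        (Submodule.span ℝ
          {t : TZ | ∃ v : Fin n → Z, v k ∈ Set.range i ∧ t = φZ v}).topologicalClosure) ∧
    LinearMap.ker (F : TZ →ₗ[ℝ] TW) =
      (Submodule.span ℝ
        {t : TZ | ∃ v : Fin n → Z, (∃ k, v k ∈ Set.range i) ∧ t = φZ v}).topologicalClosure := by
  classical
  obtain ⟨ρ, hρ⟩ := hsplit
  set Sall : Set TZ :=
    {t : TZ | ∃ v : Fin n → Z, (∃ k, v k ∈ Set.range i) ∧ t = φZ v} with hSall
  -- each auxMk is contained in ker F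
  have hjzero : ∀ z : Z, z ∈ Set.range i → j z = 0 := by
    intro z hz
    have h1 : z ∈ LinearMap.ker (j : Z →ₗ[ℝ] W) := by rw [← hexact]; exact hz
    exact LinearMap.mem_ker.1 h1
  have hMkker : ∀ k : Fin n, auxMk i φZ k ≤ LinearMap.ker (F : TZ →ₗ[ℝ] TW) := by
    intro k
    apply Submodule.topologicalClosure_minimal
    · apply Submodule.span_le.2
      rintro t ⟨v, hv, rfl⟩
      rw [SetLike.mem_coe, LinearMap.mem_ker, ContinuousLinearMap.coe_coe, hF]
      exact ContinuousMultilinearMap.map_coord_zero _ k (hjzero _ hv)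
    · exact ContinuousLinearMap.isClosed_ker F
  have hSallker : Sall ⊆ (LinearMap.ker (F : TZ →ₗ[ℝ] TW) : Set TZ) := by
    rintro t ⟨v, ⟨k, hk⟩, rfl⟩
    rw [SetLike.mem_coe, LinearMap.mem_ker, ContinuousLinearMap.coe_coe, hF]
    exact ContinuousMultilinearMap.map_coord_zero _ k (hjzero _ hk)
  -- a bounded right inverse of j
  obtain ⟨Cj, hCjpos, hjinv⟩ := ContinuousLinearMap.exists_preimage_norm_le j hj
  choose σ hσ1 hσ2 using hjinv
  -- hard direction of (ii): ker F ≤ closure of span of Sall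
  have hker_le : LinearMap.ker (F : TZ →ₗ[ℝ] TW) ≤ (Submodule.span ℝ Sall).topologicalClosure := by
    intro t htker
    by_contra hmem
    obtain ⟨G, u, hGa, hGu⟩ := geometric_hahn_banach_closed_point
      (Submodule.convex _) (Submodule.isClosed_topologicalClosure _) hmem
    have hG0 : ∀ a ∈ (Submodule.span ℝ Sall).topologicalClosure, G a = 0 := by
      intro a ha
      by_contra hne
      have hsc : ∀ c : ℝ, c * G a < u := by
        intro c
        have := hGa _ (Submodule.smul_mem _ c ha)
        simpa using this
      have h1 := hsc ((u + 1) / G a)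
      rw [div_mul_cancel₀ _ hne] at h1
      linarith
    have hupos : 0 < u := by
      have := hGa 0 (Submodule.zero_mem _)
      simpa using this
    have hGvan : ∀ (v : Fin n → Z) (k : Fin n), v k ∈ Set.range i → G (φZ v) = 0 := by
      intro v k hv
      apply hG0
      apply Submodule.le_topologicalClosure
      exact Submodule.subset_span ⟨v, ⟨k, hv⟩, rfl⟩
    -- invariance of G under changing representatives mod ker j
    have hinv : ∀ v v' : Fin n → Z, (∀ m, j (v m) = j (v' m)) → G (φZ v) = G (φZ v') := by
      intro v v' hvv
      set uu : ℕ → (Fin n → Z) := fun r m => if (m : ℕ) < r then v' m else v m with huu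
      have hstep : ∀ r : ℕ, r < n → G (φZ (uu r)) = G (φZ (uu (r + 1))) := by
        intro r hr
        set k : Fin n := ⟨r, hr⟩ with hk
        have e1 : uu (r + 1) = Function.update (uu r) k (v' k) := by
          funext m
          rcases eq_or_ne m k with rfl | hmk
          · simp [huu, hk, Nat.lt_succ_self]
          · rw [Function.update_of_ne hmk]
            have hmr : (m : ℕ) ≠ r := by
              simpa [hk, Fin.ext_iff] using hmk
            by_cases h : (m : ℕ) < r
            · simp [huu, h, Nat.lt_succ_of_lt h]
            · have h2 : ¬(m : ℕ) < r + 1 := by omega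
              simp [huu, h, h2]
        have e2 : uu r = Function.update (uu r) k (v k) := by
          have h3 : uu r k = v k := by simp [huu, hk]
          rw [← h3, Function.update_eq_self]
        have e4 : v k - v' k ∈ Set.range i := by
          have h1 : v k - v' k ∈ LinearMap.ker (j : Z →ₗ[ℝ] W) := by
            rw [LinearMap.mem_ker, ContinuousLinearMap.coe_coe, map_sub, hvv k, sub_self]
          rw [← hexact] at h1; exact h1
        have e5 : G (φZ (Function.update (uu r) k (v k - v' k))) = 0 :=
          hGvan _ k (by rw [Function.update_self]; exact e4)
        have e3 : G (φZ (uu r)) - G (φZ (uu (r + 1))) = 0 := by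
          rw [e1]
          nth_rewrite 1 [e2]
          rw [← map_sub G, ← ContinuousMultilinearMap.map_update_sub φZ (uu r) k (v k) (v' k)]
          exact e5
        linarith
      have hind : ∀ r : ℕ, r ≤ n → G (φZ v) = G (φZ (uu r)) := by
        intro r
        induction r with
        | zero =>
          intro _
          have : uu 0 = v := by funext m; simp [huu]
          rw [this]
        | succ r ih =>
          intro hrn
          rw [ih (Nat.le_of_succ_le hrn)]
          exact hstep r hrn
      have hfin := hind n le_rfl
      have huun : uu n = v' := by funext m; simp [huu, m.isLt]
      rw [huun] at hfin
      exact hfin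
    -- construct the multilinear form on W
    have hcomp : ∀ (w : Fin n → W) (m : Fin n) (a : W),
        (fun m' => σ (Function.update w m a m')) =
          Function.update (fun m' => σ (w m')) m (σ a) := by
      intro w m a
      funext m'
      rcases eq_or_ne m' m with rfl | hm
      · simp
      · simp [Function.update_of_ne hm]
    set HB : MultilinearMap ℝ (fun _ : Fin n => W) ℝ :=
      { toFun := fun w => G (φZ fun m => σ (w m))
        map_update_add' := by
          intro dec w m x y
          have hdec : dec = instDecidableEqFin n := Subsingleton.elim _ _
          subst hdec
          rw [hcomp, hcomp, hcomp]
          have h1 : G (φZ (Function.update (fun m' => σ (w m')) m (σ (x + y)))) =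
              G (φZ (Function.update (fun m' => σ (w m')) m (σ x + σ y))) := by
            apply hinv
            intro m'
            rcases eq_or_ne m' m with rfl | hm
            · simp [hσ1, map_add]
            · simp [Function.update_of_ne hm]
          rw [h1, ContinuousMultilinearMap.map_update_add, map_add]
        map_update_smul' := by
          intro dec w m c x
          have hdec : dec = instDecidableEqFin n := Subsingleton.elim _ _
          subst hdec
          rw [hcomp, hcomp]
          have h1 : G (φZ (Function.update (fun m' => σ (w m')) m (σ (c • x)))) =
              G (φZ (Function.update (fun m' => σ (w m')) m (c • σ x))) := by
            apply hinv
            intro m'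
            rcases eq_or_ne m' m with rfl | hm
            · simp [hσ1, map_smul]
            · simp [Function.update_of_ne hm]
          rw [h1, ContinuousMultilinearMap.map_update_smul, map_smul] } with hHB
    have hHBbound : ∀ w : Fin n → W, ‖HB w‖ ≤ (‖G‖ * ‖φZ‖ * Cj ^ n) * ∏ m, ‖w m‖ := by
      intro w
      have e0 : HB w = G (φZ fun m => σ (w m)) := rfl
      have e1 : ‖G (φZ fun m => σ (w m))‖ ≤ ‖G‖ * ‖φZ fun m => σ (w m)‖ := G.le_opNorm _
      have e2 : ‖φZ fun m => σ (w m)‖ ≤ ‖φZ‖ * ∏ m, ‖σ (w m)‖ := φZ.le_opNorm _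
      have e3 : (∏ m, ‖σ (w m)‖) ≤ ∏ m, (Cj * ‖w m‖) :=
        Finset.prod_le_prod (fun m _ => norm_nonneg _) (fun m _ => hσ2 (w m))
      have e4 : (∏ m, (Cj * ‖w m‖)) = Cj ^ n * ∏ m, ‖w m‖ := by
        rw [Finset.prod_mul_distrib, Finset.prod_const, Finset.card_univ, Fintype.card_fin]
      have e5 : (0:ℝ) ≤ ∏ m, ‖w m‖ := Finset.prod_nonneg fun m _ => norm_nonneg _
      have e6 : ‖φZ fun m => σ (w m)‖ ≤ ‖φZ‖ * (Cj ^ n * ∏ m, ‖w m‖) := by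
        refine e2.trans ?_
        rw [← e4]
        exact mul_le_mul_of_nonneg_left e3 (norm_nonneg _)
      rw [e0]
      calc ‖G (φZ fun m => σ (w m))‖ ≤ ‖G‖ * ‖φZ fun m => σ (w m)‖ := e1
        _ ≤ ‖G‖ * (‖φZ‖ * (Cj ^ n * ∏ m, ‖w m‖)) :=
            mul_le_mul_of_nonneg_left e6 (norm_nonneg _)
        _ = (‖G‖ * ‖φZ‖ * Cj ^ n) * ∏ m, ‖w m‖ := by ring
    obtain ⟨h, hh1, _⟩ := hTW.lift ℝ (HB.mkContinuous _ hHBbound)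
    have hh : ∀ w : Fin n → W, h (φW w) = G (φZ fun m => σ (w m)) := by
      intro w
      rw [hh1 w]
      rfl
    have hGF : G = h.comp F := by
      apply aux_ext φZ hTZ.dense
      intro v
      rw [ContinuousLinearMap.comp_apply, hF, hh]
      apply hinv
      intro m
      rw [hσ1]
    have hGt : G t = 0 := by
      rw [hGF, ContinuousLinearMap.comp_apply, ← ContinuousLinearMap.coe_coe F, LinearMap.mem_ker.1 htker, map_zero]
    rw [hGt] at hGu
    linarith
  -- the extension operators
  have hXkex := fun k => aux_exists_Xk i ρ hρ φZ hTZ.dense (hTZ.lift ℝ) k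
  choose Xk hXk1 hXk2 hXk3 hXk4 using hXkex
  set c0 : ℝ := ‖ρ‖ * ‖i‖ * ‖φZ‖ with hc0
  have hc00 : 0 ≤ c0 := by positivity
  have hrestr : ∀ (G : TZ →L[ℝ] ℝ) (p : Submodule ℝ TZ), ‖G.comp p.subtypeL‖ ≤ ‖G‖ := by
    intro G p
    apply ContinuousLinearMap.opNorm_le_bound _ (ContinuousLinearMap.opNorm_nonneg _)
    rintro ⟨x, hx⟩
    exact G.le_opNorm x
  -- iterated corrections
  set Ec : List (Fin n) → (TZ →L[ℝ] ℝ) → (TZ →L[ℝ] ℝ) :=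
    fun ls => ls.foldr (fun m acc => fun H => acc H - Xk m (acc H)) id with hEcdef
  have hEccons : ∀ (m : Fin n) (tl : List (Fin n)) (H : TZ →L[ℝ] ℝ),
      Ec (m :: tl) H = Ec tl H - Xk m (Ec tl H) := fun _ _ _ => rfl
  have hEcbound : ∀ (ls : List (Fin n)) (H : TZ →L[ℝ] ℝ),
      ‖Ec ls H‖ ≤ (1 + c0) ^ ls.length * ‖H‖ := by
    intro ls
    induction ls with
    | nil => intro H; simp [hEcdef]
    | cons m tl ih =>
      intro H
      rw [hEccons]
      have e1 : ‖Xk m (Ec tl H)‖ ≤ c0 * ‖Ec tl H‖ := by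
        refine (hXk1 m (Ec tl H)).trans ?_
        exact mul_le_mul_of_nonneg_left (hrestr _ _) hc00
      have e2 : ‖Ec tl H‖ ≤ (1 + c0) ^ tl.length * ‖H‖ := ih H
      have e3 : (0:ℝ) ≤ ‖Ec tl H‖ := ContinuousLinearMap.opNorm_nonneg _
      calc ‖Ec tl H - Xk m (Ec tl H)‖ ≤ ‖Ec tl H‖ + ‖Xk m (Ec tl H)‖ := norm_sub_le _ _
        _ ≤ (1 + c0) * ‖Ec tl H‖ := by nlinarith
        _ ≤ (1 + c0) * ((1 + c0) ^ tl.length * ‖H‖) := by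
            apply mul_le_mul_of_nonneg_left e2 (by linarith)
        _ = (1 + c0) ^ (m :: tl).length * ‖H‖ := by
            rw [List.length_cons, pow_succ]
            ring
  have hEcvan : ∀ ls : List (Fin n), ls.Nodup → ∀ H : TZ →L[ℝ] ℝ, ∀ m ∈ ls,
      ∀ x ∈ auxMk i φZ m, Ec ls H x = 0 := by
    intro ls
    induction ls with
    | nil =>
      intro _ H m hm
      exact absurd hm List.not_mem_nil
    | cons m' tl ih =>
      intro hnd H m hm x hx
      rw [hEccons, ContinuousLinearMap.sub_apply]
      rcases List.mem_cons.1 hm with rfl | hmtl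
      · rw [hXk2 m (Ec tl H) x hx, sub_self]
      · have hnd' := List.nodup_cons.1 hnd
        have hne : m ≠ m' := fun h => hnd'.1 (h ▸ hmtl)
        have hvan : ∀ x ∈ auxMk i φZ m, Ec tl H x = 0 :=
          fun x hx => ih hnd'.2 H m hmtl x hx
        rw [hvan x hx, hXk3 m' m hne (Ec tl H) hvan x hx, sub_zero]
  have hEcid : ∀ ls : List (Fin n), ∀ H : TZ →L[ℝ] ℝ,
      (∀ m ∈ ls, ∀ x ∈ auxMk i φZ m, H x = 0) → Ec ls H = H := by
    intro ls
    induction ls with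
    | nil => intro H _; rfl
    | cons m' tl ih =>
      intro H hH
      rw [hEccons, ih H (fun m hm => hH m (List.mem_cons_of_mem _ hm)),
        hXk4 m' H (hH m' List.mem_cons_self), sub_zero]
  -- closedness of finite suprema
  have hclosed : ∀ s : Finset (Fin n),
      IsClosed ((⨆ k ∈ s, auxMk i φZ k : Submodule ℝ TZ) : Set TZ) := by
    intro s
    induction s using Finset.induction_on with
    | empty =>
      have e : (⨆ k ∈ (∅ : Finset (Fin n)), auxMk i φZ k : Submodule ℝ TZ) = ⊥ := by simp
      rw [e]
      have e2 : ((⊥ : Submodule ℝ TZ) : Set TZ) = {0} := by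
        ext x; simp
      rw [e2]
      exact isClosed_singleton
    | @insert a s ha ih =>
      have hsup : (⨆ k ∈ insert a s, auxMk i φZ k : Submodule ℝ TZ)
          = (⨆ k ∈ s, auxMk i φZ k : Submodule ℝ TZ) ⊔ auxMk i φZ a := by
        rw [Finset.iSup_insert, sup_comm]
      rw [hsup]
      apply aux_isClosed_sup _ _ ih (Submodule.isClosed_topologicalClosure _)
        ((1 + c0) ^ n * c0) (by positivity) (fun G => Ec s.toList (Xk a G))
      · -- norm bound
        intro G
        refine (hEcbound s.toList (Xk a G)).trans ?_
        have e2 : (1 + c0) ^ s.toList.length ≤ (1 + c0) ^ n := by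
          apply pow_le_pow_right₀ (by linarith)
          rw [Finset.length_toList]
          exact (Finset.card_le_univ s).trans (le_of_eq (by simp))
        calc (1 + c0) ^ s.toList.length * ‖Xk a G‖
            ≤ (1 + c0) ^ n * (c0 * ‖G.comp (auxMk i φZ a).subtypeL‖) :=
              mul_le_mul e2 (hXk1 a G) (ContinuousLinearMap.opNorm_nonneg _) (by positivity)
          _ = ((1 + c0) ^ n * c0) * ‖G.comp (auxMk i φZ a).subtypeL‖ := by ring
      · -- vanishing on the old part
        intro G x hx
        have hker : (⨆ k ∈ s, auxMk i φZ k : Submodule ℝ TZ)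
            ≤ LinearMap.ker ((Ec s.toList (Xk a G)) : TZ →ₗ[ℝ] ℝ) := by
          refine iSup_le fun k => iSup_le fun hk => ?_
          intro x hx
          rw [LinearMap.mem_ker]
          exact hEcvan s.toList s.nodup_toList (Xk a G) k (Finset.mem_toList.2 hk) x hx
        exact LinearMap.mem_ker.1 (hker hx)
      · -- reconstruction on the new part
        intro G hG l hl
        have hvanG : ∀ k ∈ s, ∀ x ∈ auxMk i φZ k, G x = 0 := by
          intro k hk x hx
          refine hG x ?_
          exact (le_iSup₂ (f := fun k _ => auxMk i φZ k) k hk) hx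
        have hXaG : ∀ k ∈ s, ∀ x ∈ auxMk i φZ k, Xk a G x = 0 := by
          intro k hk x hx
          have hka : k ≠ a := fun h => ha (h ▸ hk)
          exact hXk3 a k hka G (hvanG k hk) x hx
        rw [hEcid s.toList (Xk a G) (fun m hm => hXaG m (Finset.mem_toList.1 hm))]
        exact hXk2 a G l hl
  have hsupclosed : IsClosed ((⨆ k : Fin n, auxMk i φZ k : Submodule ℝ TZ) : Set TZ) := by
    have h1 := hclosed Finset.univ
    have e : (⨆ k ∈ (Finset.univ : Finset (Fin n)), auxMk i φZ k : Submodule ℝ TZ)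
        = ⨆ k, auxMk i φZ k := by
      apply le_antisymm
      · exact iSup_le fun k => iSup_le fun _ => le_iSup _ k
      · exact iSup_le fun k =>
          le_iSup₂ (f := fun k (_ : k ∈ Finset.univ) => auxMk i φZ k) k (Finset.mem_univ k)
    rwa [e] at h1
  constructor
  · show LinearMap.ker (F : TZ →ₗ[ℝ] TW) = ⨆ k : Fin n, auxMk i φZ k
    apply le_antisymm
    · refine le_trans hker_le ?_
      apply Submodule.topologicalClosure_minimal
      · apply Submodule.span_le.2
        rintro t ⟨v, ⟨k, hk⟩, rfl⟩
        refine SetLike.mem_coe.2 ((le_iSup (fun k => auxMk i φZ k) k) ?_)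
        exact Submodule.le_topologicalClosure _ (Submodule.subset_span ⟨v, hk, rfl⟩)
      · exact hsupclosed
    · exact iSup_le hMkker
  · show LinearMap.ker (F : TZ →ₗ[ℝ] TW) = (Submodule.span ℝ Sall).topologicalClosure
    apply le_antisymm hker_le
    exact Submodule.topologicalClosure_minimal _ (Submodule.span_le.2 hSallker)
      (ContinuousLinearMap.isClosed_ker F)
end

section
/- Let 0 → B →^i A →^j D → 0 be an extension of Banach algebras (a short exact sequence of Banach algebras with continuous algebra homomorphisms). If B has a left or right bounded approximate identity, then the extension is weakly admissible: there exists a bounded linear operator L : B* → A* with i* ∘ L = id_{B*}. -/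
open NormedSpace Filter

private lemma tendsto_limUnder_of_bounded {ι : Type} (U : Ultrafilter ι) (g : ι → ℝ) (R : ℝ)
    (h : ∀ α, |g α| ≤ R) : Tendsto g (↑U) (nhds (limUnder (↑U) g)) := by
  have hmem : ∀ᶠ α in (↑U : Filter ι), g α ∈ Set.Icc (-R) R :=
    Filter.Eventually.of_forall fun α => abs_le.1 (h α)
  obtain ⟨x, -, hx⟩ := isCompact_Icc.ultrafilter_le_nhds (U.map g)
    (by rwa [Ultrafilter.coe_map, le_principal_iff, mem_map])
  have hx' : Tendsto g (↑U) (nhds x) := hx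
  rwa [hx'.limUnder_eq]

private lemma key_lemma {ι : Type} {B A D : Type*}
    [NormedAddCommGroup B] [NormedSpace ℝ B] [CompleteSpace B]
    [NormedAddCommGroup A] [NormedSpace ℝ A] [CompleteSpace A]
    [NormedAddCommGroup D] [NormedSpace ℝ D]
    (iL : B →L[ℝ] A) (jL : A →L[ℝ] D) (hi : Function.Injective iL)
    (hexact : ∀ a : A, jL a = 0 ↔ ∃ b, iL b = a)
    (l : Filter ι) (hl : l.NeBot) (T : ι → A →L[ℝ] A) (M : ℝ)
    (hker : ∀ α a, jL (T α a) = 0)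
    (hM : ∀ α, ‖T α‖ ≤ M)
    (htend : ∀ b : B, Tendsto (fun α => T α (iL b)) l (nhds (iL b))) :
    ∃ L : StrongDual ℝ B →L[ℝ] StrongDual ℝ A, ∀ (f : StrongDual ℝ B) (b : B), (L f) (iL b) = f b := by
  haveI := hl
  haveI : CompleteSpace (LinearMap.ker (jL : A →ₗ[ℝ] D)) := by exact (ContinuousLinearMap.isClosed_ker jL).completeSpace_coe
  have hmem : ∀ b : B, iL b ∈ LinearMap.ker (jL : A →ₗ[ℝ] D) := fun b =>
    by rw [LinearMap.mem_ker]; exact (hexact (iL b)).2 ⟨b, rfl⟩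
  set iK : B →L[ℝ] LinearMap.ker (jL : A →ₗ[ℝ] D) := iL.codRestrict (LinearMap.ker (jL : A →ₗ[ℝ] D)) hmem with hiK
  have hinj' : LinearMap.ker (iK : B →ₗ[ℝ] LinearMap.ker (jL : A →ₗ[ℝ] D)) = ⊥ := by
    apply LinearMap.ker_eq_bot_of_injective
    intro x y hxy
    apply hi
    have : ((iK x : LinearMap.ker (jL : A →ₗ[ℝ] D)) : A) = ((iK y : LinearMap.ker (jL : A →ₗ[ℝ] D)) : A) := congrArg Subtype.val hxy
    exact this
  have hsurj' : LinearMap.range (iK : B →ₗ[ℝ] LinearMap.ker (jL : A →ₗ[ℝ] D)) = ⊤ := by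
    apply LinearMap.range_eq_top_of_surjective
    rintro ⟨a, ha⟩
    obtain ⟨b, hb⟩ := (hexact a).1 (LinearMap.mem_ker.1 ha)
    exact ⟨b, Subtype.ext hb⟩
  set e : B ≃L[ℝ] LinearMap.ker (jL : A →ₗ[ℝ] D) := ContinuousLinearEquiv.ofBijective iK hinj' hsurj' with he
  set σ : LinearMap.ker (jL : A →ₗ[ℝ] D) →L[ℝ] B := (e.symm : LinearMap.ker (jL : A →ₗ[ℝ] D) →L[ℝ] B) with hσ
  set S : ι → A →L[ℝ] B := fun α =>
    σ.comp ((T α).codRestrict (LinearMap.ker (jL : A →ₗ[ℝ] D)) (fun a => LinearMap.mem_ker.2 (hker α a)))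
    with hS
  set K : ℝ := ‖σ‖ * M with hK
  have hKnn : 0 ≤ K := by
    obtain ⟨α⟩ := Filter.nonempty_of_neBot l
    exact mul_nonneg (norm_nonneg σ) ((norm_nonneg (T α)).trans (hM α))
  have hSbound : ∀ α a, ‖S α a‖ ≤ K * ‖a‖ := by
    intro α a
    have h1 : ‖S α a‖ ≤ ‖σ‖ * ‖T α a‖ := by
      have : ‖((T α).codRestrict (LinearMap.ker (jL : A →ₗ[ℝ] D)) (fun a => LinearMap.mem_ker.2 (hker α a))) a‖
          = ‖T α a‖ := rfl
      calc ‖S α a‖ ≤ ‖σ‖ * ‖((T α).codRestrict (LinearMap.ker (jL : A →ₗ[ℝ] D))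
            (fun a => LinearMap.mem_ker.2 (hker α a))) a‖ := σ.le_opNorm _
        _ = ‖σ‖ * ‖T α a‖ := by rw [this]
    have h2 : ‖T α a‖ ≤ M * ‖a‖ := ((T α).le_opNorm a).trans
      (mul_le_mul_of_nonneg_right (hM α) (norm_nonneg a))
    calc ‖S α a‖ ≤ ‖σ‖ * (M * ‖a‖) :=
          h1.trans (mul_le_mul_of_nonneg_left h2 (norm_nonneg σ))
      _ = K * ‖a‖ := by ring
  set U : Ultrafilter ι := Ultrafilter.of l with hU
  have hUl : (↑U : Filter ι) ≤ l := Ultrafilter.of_le l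
  -- the limit functional
  set val : StrongDual ℝ B → A → ℝ := fun f a => limUnder (↑U) (fun α => f (S α a)) with hval
  have htendF : ∀ f a, Tendsto (fun α => f (S α a)) (↑U) (nhds (val f a)) := by
    intro f a
    refine tendsto_limUnder_of_bounded U _ (‖f‖ * (K * ‖a‖)) (fun α => ?_)
    have := f.le_opNorm (S α a)
    rw [← Real.norm_eq_abs]
    exact this.trans (mul_le_mul_of_nonneg_left (hSbound α a) (norm_nonneg f))
  have habs : ∀ f a, |val f a| ≤ ‖f‖ * K * ‖a‖ := by
    intro f a
    have : ∀ α, |(fun α => f (S α a)) α| ≤ ‖f‖ * K * ‖a‖ := by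
      intro α
      rw [← Real.norm_eq_abs]
      calc ‖f (S α a)‖ ≤ ‖f‖ * ‖S α a‖ := f.le_opNorm _
        _ ≤ ‖f‖ * (K * ‖a‖) :=
            mul_le_mul_of_nonneg_left (hSbound α a) (norm_nonneg f)
        _ = ‖f‖ * K * ‖a‖ := by ring
    have hle : ∀ᶠ α in (↑U : Filter ι), (fun α => f (S α a)) α ∈
        Set.Icc (-(‖f‖ * K * ‖a‖)) (‖f‖ * K * ‖a‖) :=
      Filter.Eventually.of_forall fun α => abs_le.1 (this α)
    have := (isClosed_Icc (a := -(‖f‖ * K * ‖a‖)) (b := ‖f‖ * K * ‖a‖)).mem_of_tendsto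
      (htendF f a) hle
    exact abs_le.2 this
  -- linearity of val in a
  have hadd : ∀ f a a', val f (a + a') = val f a + val f a' := by
    intro f a a'
    have h : Tendsto (fun α => f (S α (a + a'))) (↑U) (nhds (val f a + val f a')) := by
      have := (htendF f a).add (htendF f a')
      simpa [map_add] using this
    exact h.limUnder_eq
  have hsmul : ∀ f (c : ℝ) a, val f (c • a) = c * val f a := by
    intro f c a
    have h : Tendsto (fun α => f (S α (c • a))) (↑U) (nhds (c * val f a)) := by
      have := (htendF f a).const_mul c
      simpa [map_smul, smul_eq_mul] using this
    exact h.limUnder_eq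
  -- linearity of val in f
  have hfadd : ∀ (f g : StrongDual ℝ B) a, val (f + g) a = val f a + val g a := by
    intro f g a
    have h : Tendsto (fun α => (f + g) (S α a)) (↑U) (nhds (val f a + val g a)) := by
      have := (htendF f a).add (htendF g a)
      simpa using this
    exact h.limUnder_eq
  have hfsmul : ∀ (c : ℝ) (f : StrongDual ℝ B) a, val (c • f) a = c * val f a := by
    intro c f a
    have h : Tendsto (fun α => (c • f) (S α a)) (↑U) (nhds (c * val f a)) := by
      have := (htendF f a).const_mul c
      simpa [smul_eq_mul] using this
    exact h.limUnder_eq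
  -- build L f as continuous linear functional on A
  set lmap : StrongDual ℝ B → (A →ₗ[ℝ] ℝ) := fun f =>
    { toFun := val f
      map_add' := hadd f
      map_smul' := fun c a => by simp only [smul_eq_mul, RingHom.id_apply]; exact hsmul f c a }
    with hlmap
  have hbnd : ∀ f a, ‖lmap f a‖ ≤ ‖f‖ * K * ‖a‖ := by
    intro f a
    rw [Real.norm_eq_abs]
    exact habs f a
  set Lf : StrongDual ℝ B → StrongDual ℝ A := fun f =>
    LinearMap.mkContinuous (lmap f) (‖f‖ * K) (hbnd f) with hLf
  have hLfnorm : ∀ f, ‖Lf f‖ ≤ K * ‖f‖ := by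
    intro f
    have := LinearMap.mkContinuous_norm_le (lmap f)
      (mul_nonneg (norm_nonneg f) hKnn) (hbnd f)
    calc ‖Lf f‖ ≤ ‖f‖ * K := this
      _ = K * ‖f‖ := mul_comm _ _
  set L : StrongDual ℝ B →L[ℝ] StrongDual ℝ A :=
    LinearMap.mkContinuous
      { toFun := Lf
        map_add' := fun f g => by
          ext a
          exact hfadd f g a
        map_smul' := fun c f => by
          ext a
          simp [smul_eq_mul]; exact hfsmul c f a }
      K (fun f => hLfnorm f) with hL
  refine ⟨L, fun f b => ?_⟩
  -- L f (iL b) = val f (iL b) = f b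
  show val f (iL b) = f b
  have h1 : Tendsto (fun α => T α (iL b)) (↑U) (nhds (iL b)) := (htend b).mono_left hUl
  have h2 : Tendsto
      (fun α => ((T α).codRestrict (LinearMap.ker (jL : A →ₗ[ℝ] D))
        (fun a => LinearMap.mem_ker.2 (hker α a))) (iL b)) (↑U)
      (nhds (⟨iL b, hmem b⟩ : LinearMap.ker (jL : A →ₗ[ℝ] D))) := by
    rw [tendsto_subtype_rng]
    exact h1
  have hσib : σ (⟨iL b, hmem b⟩ : LinearMap.ker (jL : A →ₗ[ℝ] D)) = b := by
    have heq : (⟨iL b, hmem b⟩ : LinearMap.ker (jL : A →ₗ[ℝ] D)) = e b := by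
      apply Subtype.ext
      simp [he, hiK]
    rw [heq]
    exact e.symm_apply_apply b
  have h3 : Tendsto (fun α => S α (iL b)) (↑U) (nhds b) := by
    have := (σ.continuous.tendsto _).comp h2
    rwa [hσib] at this
  have h4 : Tendsto (fun α => f (S α (iL b))) (↑U) (nhds (f b)) :=
    (f.continuous.tendsto _).comp h3
  exact h4.limUnder_eq

/-- Lemma 3.6: Let 0 → B →^i A →^j D → 0 be an extension of Banach
algebras.  If B has a left or right bounded approximate identity, then the extension
is weakly admissible: there is a bounded linear operator L : B* → A* with
i* ∘ L = id_{B*}. -/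
theorem extension_weakly_admissible_of_bounded_approximate_identity
    {B A D : Type*}
    [NormedRing B] [NormedAlgebra ℝ B] [CompleteSpace B]
    [NormedRing A] [NormedAlgebra ℝ A] [CompleteSpace A]
    [NormedRing D] [NormedAlgebra ℝ D] [CompleteSpace D]
    (i : B →ₐ[ℝ] A) (j : A →ₐ[ℝ] D)
    (hi_cont : Continuous i) (hj_cont : Continuous j)
    (hi : Function.Injective i) (hj : Function.Surjective j)
    (hexact : ∀ a : A, j a = 0 ↔ ∃ b, i b = a)
    -- B has a left or right bounded approximate identity (a bounded net (e_α)):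
    (hbai : ∃ (ι : Type) (l : Filter ι) (e : ι → B), l.NeBot ∧
      (∃ C : ℝ, ∀ α, ‖e α‖ ≤ C) ∧
      ((∀ b : B, Tendsto (fun α => b * e α) l (nhds b)) ∨
       (∀ b : B, Tendsto (fun α => e α * b) l (nhds b)))) :
    ∃ L : StrongDual ℝ B →L[ℝ] StrongDual ℝ A, ∀ (f : StrongDual ℝ B) (b : B), (L f) (i b) = f b := by
  obtain ⟨ι, l, eN, hl, ⟨C, hC⟩, hor⟩ := hbai
  -- continuous linear versions of i and j
  set iL : B →L[ℝ] A := ⟨i.toLinearMap, hi_cont⟩ with hiL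
  set jL : A →L[ℝ] D := ⟨j.toLinearMap, hj_cont⟩ with hjL
  have hiL_apply : ∀ b, iL b = i b := fun _ => rfl
  have hjL_apply : ∀ a, jL a = j a := fun _ => rfl
  have hexact' : ∀ a : A, jL a = 0 ↔ ∃ b, iL b = a := hexact
  have hji : ∀ b : B, j (i b) = 0 := fun b => (hexact (i b)).2 ⟨b, rfl⟩
  rcases hor with hR | hL
  · -- right b.a.i. : use T α = right multiplication by i (e α)
    set T : ι → A →L[ℝ] A := fun α =>
      LinearMap.mkContinuous (LinearMap.mulRight ℝ (i (eN α))) ‖i (eN α)‖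
        (fun a => by simpa [mul_comm] using norm_mul_le a (i (eN α))) with hT
    have hTnorm : ∀ α, ‖T α‖ ≤ ‖iL‖ * C := by
      intro α
      refine (LinearMap.mkContinuous_norm_le _ (norm_nonneg _) _).trans ?_
      calc ‖i (eN α)‖ = ‖iL (eN α)‖ := rfl
        _ ≤ ‖iL‖ * ‖eN α‖ := iL.le_opNorm _
        _ ≤ ‖iL‖ * C := mul_le_mul_of_nonneg_left (hC α) (norm_nonneg iL)
    have hkerT : ∀ α a, jL (T α a) = 0 := by
      intro α a
      show j (a * i (eN α)) = 0
      rw [map_mul, hji, mul_zero]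
    have htendT : ∀ b : B, Tendsto (fun α => T α (iL b)) l (nhds (iL b)) := by
      intro b
      have h1 : Tendsto (fun α => i (b * eN α)) l (nhds (i b)) :=
        (hi_cont.tendsto b).comp (hR b)
      have h2 : ∀ α, T α (iL b) = i (b * eN α) := by
        intro α
        show i b * i (eN α) = i (b * eN α)
        rw [map_mul]
      simp only [h2]; exact h1
    obtain ⟨L, hLp⟩ := key_lemma iL jL hi hexact' l hl T (‖iL‖ * C) hkerT hTnorm htendT
    exact ⟨L, hLp⟩
  · -- left b.a.i. : use T α = left multiplication by i (e α)
    set T : ι → A →L[ℝ] A := fun α =>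
      LinearMap.mkContinuous (LinearMap.mulLeft ℝ (i (eN α))) ‖i (eN α)‖
        (fun a => by simpa using norm_mul_le (i (eN α)) a) with hT
    have hTnorm : ∀ α, ‖T α‖ ≤ ‖iL‖ * C := by
      intro α
      refine (LinearMap.mkContinuous_norm_le _ (norm_nonneg _) _).trans ?_
      calc ‖i (eN α)‖ = ‖iL (eN α)‖ := rfl
        _ ≤ ‖iL‖ * ‖eN α‖ := iL.le_opNorm _
        _ ≤ ‖iL‖ * C := mul_le_mul_of_nonneg_left (hC α) (norm_nonneg iL)
    have hkerT : ∀ α a, jL (T α a) = 0 := by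
      intro α a
      show j (i (eN α) * a) = 0
      rw [map_mul, hji, zero_mul]
    have htendT : ∀ b : B, Tendsto (fun α => T α (iL b)) l (nhds (iL b)) := by
      intro b
      have h1 : Tendsto (fun α => i (eN α * b)) l (nhds (i b)) :=
        (hi_cont.tendsto b).comp (hL b)
      have h2 : ∀ α, T α (iL b) = i (eN α * b) := by
        intro α
        show i (eN α) * i b = i (eN α * b)
        rw [map_mul]
      simp only [h2]; exact h1
    obtain ⟨L, hLp⟩ := key_lemma iL jL hi hexact' l hl T (‖iL‖ * C) hkerT hTnorm htendT
    exact ⟨L, hLp⟩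
end

section
/- Let U be a von Neumann algebra containing a sequence (p_m) of mutually orthogonal, mutually equivalent projections each equivalent to the identity (e.g. a properly infinite von Neumann algebra). Then U admits no non-zero bounded trace: U^{tr} = {f ∈ U* : f(ab) = f(ba) for all a,b} = {0}. In particular B(H)^{tr} = {0} for an infinite-dimensional Hilbert space H. -/
open NormedSpace

/-- Let U be a (unital) von Neumann / C*-algebra containing a sequence
(p_m) of mutually orthogonal, mutually equivalent projections, each Murray–von Neumann
equivalent to the identity (e.g. a properly infinite von Neumann algebra).  Then U has
no non-zero bounded trace: every continuous linear functional vanishing on all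
commutators ab − ba is zero. -/
theorem no_bounded_traces_of_properly_infinite
    {U : Type*} [NormedRing U] [StarRing U] [CStarRing U]
    [NormedAlgebra ℂ U] [CompleteSpace U] [StarModule ℂ U]
    (p : ℕ → U)
    (hproj : ∀ m, IsIdempotentElem (p m) ∧ star (p m) = p m)
    (horth : ∀ m k, m ≠ k → p m * p k = 0)
    (hequiv : ∀ m, ∃ v : U, star v * v = 1 ∧ v * star v = p m) :
    ∀ f : StrongDual ℂ U, (∀ a b : U, f (a * b) = f (b * a)) → f = 0 := by
  intro f hf
  ext a
  simp only [ContinuousLinearMap.zero_apply]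
  by_cases htriv : (1 : U) = 0
  · have ha : a = 0 := by rw [← one_mul a, htriv, zero_mul]
    rw [ha, map_zero]
  haveI : Nontrivial U := nontrivial_of_ne 1 0 htriv
  choose v hv1 hv2 using hequiv
  have hnv : ∀ m, ‖v m‖ ≤ 1 := by
    intro m
    have h1 : ‖star (v m) * v m‖ = ‖v m‖ * ‖v m‖ := CStarRing.norm_star_mul_self
    rw [hv1 m, norm_one] at h1
    nlinarith [norm_nonneg (v m), sq_nonneg (‖v m‖ - 1)]
  have hpv : ∀ m, p m * v m = v m := by
    intro m
    rw [← hv2 m, mul_assoc, hv1 m, mul_one]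
  have hvp : ∀ m, star (v m) * p m = star (v m) := by
    intro m
    have := congrArg star (hpv m)
    rwa [star_mul, (hproj m).2] at this
  have horthv : ∀ m k, m ≠ k → star (v m) * v k = 0 := by
    intro m k h
    calc star (v m) * v k = (star (v m) * p m) * (p k * v k) := by rw [hvp, hpv]
      _ = star (v m) * (p m * p k) * v k := by simp only [mul_assoc]
      _ = 0 := by rw [horth m k h, mul_zero, zero_mul]
  set x : ℕ → U := fun m => v m * a * star (v m) with hx
  have hfx : ∀ m, f (x m) = f a := by
    intro m
    calc f (v m * a * star (v m)) = f ((v m * a) * star (v m)) := by rw [mul_assoc]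
      _ = f (star (v m) * (v m * a)) := hf _ _
      _ = f ((star (v m) * v m) * a) := by rw [mul_assoc]
      _ = f a := by rw [hv1 m, one_mul]
  have hxx : ∀ m k, m ≠ k → x m * star (x k) = 0 := by
    intro m k h
    have hs : star (x k) = v k * (star a * star (v k)) := by
      simp [hx, star_mul, mul_assoc]
    calc x m * star (x k) = v m * a * (star (v m) * v k) * (star a * star (v k)) := by
          rw [hs]; simp only [hx]; simp only [mul_assoc]
      _ = 0 := by rw [horthv m k h, mul_zero, zero_mul]
  have hnx : ∀ m, ‖x m‖ ≤ ‖a‖ := by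
    intro m
    calc ‖v m * a * star (v m)‖ ≤ ‖v m * a‖ * ‖star (v m)‖ := norm_mul_le _ _
      _ ≤ (‖v m‖ * ‖a‖) * ‖star (v m)‖ :=
        mul_le_mul_of_nonneg_right (norm_mul_le _ _) (norm_nonneg _)
      _ ≤ (1 * ‖a‖) * 1 := by
          rw [norm_star]
          have h1 : 0 ≤ ‖a‖ * (1 - ‖v m‖) := mul_nonneg (norm_nonneg a) (sub_nonneg.mpr (hnv m))
          have h2 : 0 ≤ ‖a‖ * (1 - ‖v m‖) * ‖v m‖ := mul_nonneg h1 (norm_nonneg (v m))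
          nlinarith [norm_nonneg (v m), norm_nonneg a]
      _ = ‖a‖ := by ring
  have key : ∀ n : ℕ, (n : ℝ) * ‖f a‖ ≤ ‖f‖ * ‖a‖ := by
    intro n
    rcases Nat.eq_zero_or_pos n with hn0 | hn0
    · rw [hn0]
      simpa using mul_nonneg (norm_nonneg f) (norm_nonneg a)
    set N := n * n with hN
    set b : U := ∑ m ∈ Finset.range N, x m with hb
    have hfb : f b = (N : ℂ) * f a := by
      rw [hb, map_sum]
      rw [Finset.sum_congr rfl (fun m _ => hfx m)]
      simp [mul_comm]
    have hbb : b * star b = ∑ m ∈ Finset.range N, x m * star (x m) := by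
      rw [hb, star_sum, Finset.sum_mul_sum]
      refine Finset.sum_congr rfl fun m hm => ?_
      exact Finset.sum_eq_single m (fun k _ hk => hxx m k (Ne.symm hk))
        (fun hm' => absurd hm hm')
    have hnbb : ‖b * star b‖ ≤ (N : ℝ) * (‖a‖ * ‖a‖) := by
      rw [hbb]
      calc ‖∑ m ∈ Finset.range N, x m * star (x m)‖
          ≤ ∑ m ∈ Finset.range N, ‖x m * star (x m)‖ := norm_sum_le _ _
        _ ≤ ∑ m ∈ Finset.range N, ‖a‖ * ‖a‖ := by
            refine Finset.sum_le_sum fun m _ => ?_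
            calc ‖x m * star (x m)‖ ≤ ‖x m‖ * ‖star (x m)‖ := norm_mul_le _ _
              _ ≤ ‖a‖ * ‖a‖ := by
                  rw [norm_star]
                  exact mul_le_mul (hnx m) (hnx m) (norm_nonneg _) (norm_nonneg _)
        _ = (N : ℝ) * (‖a‖ * ‖a‖) := by rw [Finset.sum_const, Finset.card_range, nsmul_eq_mul]
    have hnb : ‖b‖ ≤ (n : ℝ) * ‖a‖ := by
      have h1 : ‖b * star b‖ = ‖b‖ * ‖b‖ := CStarRing.norm_self_mul_star
      rw [h1, hN] at hnbb
      push_cast at hnbb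
      have hnr : (0:ℝ) < n := by exact_mod_cast hn0
      have hna : 0 ≤ (n:ℝ) * ‖a‖ := mul_nonneg hnr.le (norm_nonneg a)
      by_contra hlt
      push_neg at hlt
      have h2 : ((n:ℝ)*‖a‖)*((n:ℝ)*‖a‖) < ‖b‖*‖b‖ := mul_lt_mul'' hlt hlt hna hna
      nlinarith
    have hfbnorm : ‖f b‖ ≤ ‖f‖ * ‖b‖ := f.le_opNorm b
    rw [hfb] at hfbnorm
    rw [norm_mul, Complex.norm_natCast] at hfbnorm
    have hcast : ((N : ℝ)) * ‖f a‖ ≤ ‖f‖ * ((n : ℝ) * ‖a‖) :=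
      hfbnorm.trans (mul_le_mul_of_nonneg_left hnb (norm_nonneg f))
    rw [hN] at hcast
    push_cast at hcast
    have hnpos : (0 : ℝ) < n := Nat.cast_pos.mpr hn0
    nlinarith
  by_contra hne
  have hpos : 0 < ‖f a‖ := norm_pos_iff.mpr hne
  obtain ⟨n, hn⟩ := exists_nat_gt ((‖f‖ * ‖a‖) / ‖f a‖)
  have := key n
  rw [div_lt_iff₀ hpos] at hn
  linarith
end
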